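/- arXiv:2210.13203 — 3 statements merged into one kernel-verified Lean document; each statement's English description precedes it below -/
import Mathlib

section
/- Let Γ be a countable amenable group and let A, B ⊆ Γ be such that m(A) < m(B) for every Γ-invariant finitely additive probability measure m on Γ. Then there exist n ≥ 1, a partition A = A₁ ⊔ ⋯ ⊔ Aₙ, and γ₁, …, γₙ ∈ Γ such that the sets γ₁A₁, …, γₙAₙ are pairwise disjoint and all contained in B. -/
open MeasureTheory Set
open scoped ENNReal

/-! Preliminary definitions: the clopen type semigroup of an action of a group `Γ`
by homeomorphisms on a topological space `X`, invariant measures, dynamical comparison,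
topological full groups, and the topology on spaces of actions. -/

/-- The group of self-homeomorphisms of `X`, with `(g * h) x = g (h x)`. -/
instance homeoGroup (X : Type*) [TopologicalSpace X] : Group (X ≃ₜ X) where
  mul g h := h.trans g
  one := Homeomorph.refl X
  inv := Homeomorph.symm
  mul_assoc a b c := Homeomorph.ext fun _ => rfl
  one_mul a := Homeomorph.ext fun _ => rfl
  mul_one a := Homeomorph.ext fun _ => rfl
  inv_mul_cancel a := Homeomorph.ext fun x => a.symm_apply_apply x

/-- The Cantor space `{0,1}^ℕ`. -/
abbrev Cantor : Type := ℕ → Bool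

section Defs

variable {Γ : Type*} [Group Γ] {X : Type*} [TopologicalSpace X]

/-- A left-invariant finitely additive probability measure on (the power set of) `Γ`,
with values in `[0,1]`. `Γ` is amenable iff such a measure exists. -/
def IsInvFapm {Γ : Type*} [Group Γ] (m : Set Γ → ℝ) : Prop :=
  (∀ E : Set Γ, 0 ≤ m E) ∧ (∀ E : Set Γ, m E ≤ 1) ∧ m Set.univ = 1 ∧
  (∀ E F : Set Γ, Disjoint E F → m (E ∪ F) = m E + m F) ∧
  (∀ (γ : Γ) (E : Set Γ), m ((γ * ·) '' E) = m E)

/-- The action of `γ ∈ Γ` on continuous `ℕ`-valued functions: `(γ · f)(x) = f(γ⁻¹ · x)`. -/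
def actC (α : Γ →* X ≃ₜ X) (γ : Γ) (f : C(X, ℕ)) : C(X, ℕ) :=
  f.comp (α γ⁻¹)

/-- The equidecomposability relation `∼` on `C(X, ℕ)`: `f ∼ g` iff `f = h₁ + ⋯ + hₙ`
and `g = γ₁·h₁ + ⋯ + γₙ·hₙ` for some `hᵢ ∈ C(X,ℕ)`, `γᵢ ∈ Γ`. -/
def TypeRel (α : Γ →* X ≃ₜ X) (f g : C(X, ℕ)) : Prop :=
  ∃ (n : ℕ) (h : Fin n → C(X, ℕ)) (γ : Fin n → Γ),
    f = ∑ i, h i ∧ g = ∑ i, actC α (γ i) (h i)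

/-- The additive congruence on `C(X, ℕ)` generated by `∼` (since `∼` is itself an
additive congruence, this is just `∼`). -/
def typeCon (α : Γ →* X ≃ₜ X) : AddCon C(X, ℕ) := addConGen (TypeRel α)

/-- The clopen type semigroup `T(α) = C(X,ℕ)/∼`. -/
abbrev TypeSemigroup (α : Γ →* X ≃ₜ X) := (typeCon α).Quotient

/-- The class `[f] ∈ T(α)` of `f ∈ C(X, ℕ)`. -/
def cls (α : Γ →* X ≃ₜ X) (f : C(X, ℕ)) : TypeSemigroup α := (typeCon α).toQuotient f

/-- The algebraic preorder on `T(α)`: `a ≤ b` iff `a + c = b` for some `c`. -/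
def tle (α : Γ →* X ≃ₜ X) (a b : TypeSemigroup α) : Prop := ∃ c, a + c = b

/-- `T(α)` is unperforated: `n • a ≤ n • b` implies `a ≤ b` for all `n ≥ 1`. -/
def IsUnperforated (α : Γ →* X ≃ₜ X) : Prop :=
  ∀ (a b : TypeSemigroup α) (n : ℕ), 1 ≤ n → tle α (n • a) (n • b) → tle α a b

/-- `T(α)` is almost unperforated: `(n+1) • a ≤ n • b` implies `a ≤ b`. -/
def IsAlmostUnperforated (α : Γ →* X ≃ₜ X) : Prop :=
  ∀ (a b : TypeSemigroup α) (n : ℕ), tle α ((n + 1) • a) (n • b) → tle α a b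

/-- `T(α)` is cancellative: `a + b = a + c` implies `b = c`. -/
def IsCancellative (α : Γ →* X ≃ₜ X) : Prop :=
  ∀ a b c : TypeSemigroup α, a + b = a + c → b = c

/-- The algebraic preorder on `T(α)` is a partial order, i.e. it is antisymmetric. -/
def TleAntisymm (α : Γ →* X ≃ₜ X) : Prop :=
  ∀ a b : TypeSemigroup α, tle α a b → tle α b a → a = b

/-- `b` is an order unit of `T(α)`: every `a` satisfies `a ≤ k • b` for some `k ∈ ℕ`. -/
def IsOrderUnit (α : Γ →* X ≃ₜ X) (b : TypeSemigroup α) : Prop :=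
  ∀ a : TypeSemigroup α, ∃ k : ℕ, tle α a (k • b)

/-- A state on `T(α)`: an additive map to `[0,∞]` sending `0` to `0`. -/
def IsState (α : Γ →* X ≃ₜ X) (ν : TypeSemigroup α → ℝ≥0∞) : Prop :=
  ν 0 = 0 ∧ ∀ a b : TypeSemigroup α, ν (a + b) = ν a + ν b

/-- `M(α)`: the set of `Γ`-invariant Radon (regular Borel) probability measures on `X`. -/
def invRadon (α : Γ →* X ≃ₜ X) : Set (@Measure X (borel X)) :=
  letI : MeasurableSpace X := borel X
  {μ : Measure X | IsProbabilityMeasure μ ∧ μ.Regular ∧ ∀ γ : Γ, Measure.map ⇑(α γ) μ = μ}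

/-- The set of `Γ`-invariant Borel probability measures on `X`. -/
def invBorel (α : Γ →* X ≃ₜ X) : Set (@Measure X (borel X)) :=
  letI : MeasurableSpace X := borel X
  {μ : Measure X | IsProbabilityMeasure μ ∧ ∀ γ : Γ, Measure.map ⇑(α γ) μ = μ}

/-- `μ([f]) = ∫ f dμ`, the value of (the state associated with) a measure on the class of
`f ∈ C(X, ℕ)`. -/
noncomputable def intOf {X : Type*} [TopologicalSpace X] (μ : @Measure X (borel X))
    (f : C(X, ℕ)) : ℝ :=
  letI : MeasurableSpace X := borel X
  ∫ x, (f x : ℝ) ∂μ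

/-- `A` is subequidecomposable to `B`: there are a partition `A = A₁ ⊔ ⋯ ⊔ Aₙ` into clopen
sets and `γ₁, …, γₙ ∈ Γ` with `γ₁A₁, …, γₙAₙ` pairwise disjoint and contained in `B`. -/
def Subequidecomposable (α : Γ →* X ≃ₜ X) (A B : Set X) : Prop :=
  ∃ (n : ℕ) (P : Fin n → Set X) (γ : Fin n → Γ),
    (∀ i, IsClopen (P i)) ∧ (Pairwise fun i j => Disjoint (P i) (P j)) ∧
    (⋃ i, P i) = A ∧
    (Pairwise fun i j => Disjoint (⇑(α (γ i)) '' P i) (⇑(α (γ j)) '' P j)) ∧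
    ∀ i, ⇑(α (γ i)) '' P i ⊆ B

/-- Dynamical comparison (with respect to invariant Radon probability measures): for all
clopen `A`, `B` with `B` nonempty and `μ(A) < μ(B)` for every `μ ∈ M(α)`, `A` is
subequidecomposable to `B`. -/
def DynComparison (α : Γ →* X ≃ₜ X) : Prop :=
  ∀ A B : Set X, IsClopen A → IsClopen B → B.Nonempty →
    (∀ μ ∈ invRadon α, μ A < μ B) → Subequidecomposable α A B

/-- Dynamical comparison (with respect to invariant Borel probability measures). -/
def DynComparisonBorel (α : Γ →* X ≃ₜ X) : Prop :=
  ∀ A B : Set X, IsClopen A → IsClopen B → B.Nonempty →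
    (∀ μ ∈ invBorel α, μ A < μ B) → Subequidecomposable α A B

/-- The action `α` is minimal: the only closed invariant subsets are `∅` and `X`. -/
def IsMinimalAction (α : Γ →* X ≃ₜ X) : Prop :=
  ∀ F : Set X, IsClosed F → (∀ γ : Γ, ⇑(α γ) '' F ⊆ F) → F = ∅ ∨ F = Set.univ

/-- Membership in the topological full group `⟦α⟧`: `g` coincides with elements of the
action on the pieces of a finite clopen partition of `X`. -/
def InTopFullGroup (α : Γ →* X ≃ₜ X) (g : X ≃ₜ X) : Prop :=
  ∃ (n : ℕ) (P : Fin n → Set X) (γ : Fin n → Γ),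
    (∀ i, IsClopen (P i)) ∧ (Pairwise fun i j => Disjoint (P i) (P j)) ∧
    (⋃ i, P i) = Set.univ ∧ ∀ i, ∀ x ∈ P i, g x = α (γ i) x

/-- `⟦α⟧` admits a dense locally finite subgroup: there is a subgroup `Λ` of `Homeo(X)`
contained in `⟦α⟧`, locally finite (all its finitely generated subgroups are finite), and
dense in `⟦α⟧` for the topology whose basic neighborhoods of `h` are
`{g : g A = h A for all A ∈ 𝒜}`, `𝒜` ranging over finite clopen partitions of `X`. -/
def HasDenseLocallyFiniteSubgroup (α : Γ →* X ≃ₜ X) : Prop :=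
  ∃ Λ : Subgroup (X ≃ₜ X),
    ((Λ : Set (X ≃ₜ X)) ⊆ {g | InTopFullGroup α g}) ∧
    (∀ s : Finset (X ≃ₜ X), (s : Set (X ≃ₜ X)) ⊆ (Λ : Set (X ≃ₜ X)) →
      ((Subgroup.closure (s : Set (X ≃ₜ X)) : Subgroup (X ≃ₜ X)) : Set (X ≃ₜ X)).Finite) ∧
    ∀ g : X ≃ₜ X, InTopFullGroup α g →
      ∀ (n : ℕ) (P : Fin n → Set X), (∀ i, IsClopen (P i)) →
        (Pairwise fun i j => Disjoint (P i) (P j)) → (⋃ i, P i) = Set.univ →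
        ∃ l ∈ Λ, ∀ i, ⇑l '' P i = ⇑g '' P i

end Defs

/-- The topology on `Homeo(X)` whose basic neighborhoods of `h` are the sets
`{g : g A = h A for all A ∈ 𝒜}`, for `𝒜` a finite clopen partition of `X`; equivalently,
the topology generated by the sets `{g : g '' A = B}` for `A`, `B` clopen. -/
def homeoTop (X : Type*) [TopologicalSpace X] : TopologicalSpace (X ≃ₜ X) :=
  TopologicalSpace.generateFrom
    {U | ∃ A B : Set X, IsClopen A ∧ IsClopen B ∧ U = {g : X ≃ₜ X | ⇑g '' A = B}}

/-- The topology on the space `A(Γ)` of actions of `Γ` on `X`, induced from the product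
topology on `Homeo(X)^Γ`. -/
def actionTop (Γ : Type*) [Group Γ] (X : Type*) [TopologicalSpace X] :
    TopologicalSpace (Γ →* (X ≃ₜ X)) :=
  letI := homeoTop X
  TopologicalSpace.induced (fun φ : Γ →* (X ≃ₜ X) => ⇑φ) Pi.topologicalSpace


section AuxForStmt0

open Filter Topology
open scoped Pointwise Classical

variable {Γ : Type*} [Group Γ] {m : Set Γ → ℝ}

lemma fapm_empty (hm : IsInvFapm m) : m ∅ = 0 := by
  have := hm.2.2.2.1 ∅ ∅ (by simp)
  simp at this; linarith

lemma fapm_mono (hm : IsInvFapm m) {E F : Set Γ} (h : E ⊆ F) : m E ≤ m F := by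
  have hd : Disjoint E (F \ E) := disjoint_sdiff_right
  have := hm.2.2.2.1 E (F \ E) hd
  rw [Set.union_diff_cancel h] at this
  have := hm.1 (F \ E)
  linarith

lemma fapm_sum (hm : IsInvFapm m) {ι : Type*} (s : Finset ι) (P : ι → Set Γ)
    (hd : ∀ i ∈ s, ∀ j ∈ s, i ≠ j → Disjoint (P i) (P j)) :
    m (⋃ i ∈ s, P i) = ∑ i ∈ s, m (P i) := by
  classical
  induction s using Finset.induction_on with
  | empty => simpa using fapm_empty hm
  | @insert a s ha ih =>
    have hd' : Disjoint (P a) (⋃ i ∈ s, P i) := by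
      refine Set.disjoint_iUnion₂_right.mpr fun i hi => ?_
      exact hd a (Finset.mem_insert_self a s) i (Finset.mem_insert_of_mem hi)
        (by rintro rfl; exact ha hi)
    rw [Finset.set_biUnion_insert, hm.2.2.2.1 _ _ hd', Finset.sum_insert ha,
      ih fun i hi j hj hij => hd i (Finset.mem_insert_of_mem hi) j (Finset.mem_insert_of_mem hj) hij]

/-- no doubling set exists when there is an invariant mean -/
lemma no_doubling (hm : IsInvFapm m) (K : Finset Γ) [DecidableEq Γ]
    (hK : ∀ S : Finset Γ, 2 * S.card ≤ (K * S).card) : False := by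
  classical
  -- Hall
  set t : Γ × Fin 2 → Finset Γ := fun p => K.image (· * p.1) with ht
  have hall : ∀ s : Finset (Γ × Fin 2), s.card ≤ (s.biUnion t).card := by
    intro s
    set S : Finset Γ := s.image Prod.fst with hS
    have h1 : s.card ≤ 2 * S.card := by
      have : s ⊆ S ×ˢ (Finset.univ : Finset (Fin 2)) := by
        intro p hp
        exact Finset.mem_product.2 ⟨Finset.mem_image_of_mem _ hp, Finset.mem_univ _⟩
      calc s.card ≤ (S ×ˢ (Finset.univ : Finset (Fin 2))).card := Finset.card_le_card this
        _ = 2 * S.card := by rw [Finset.card_product]; simp [mul_comm]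
    have h2 : K * S ⊆ s.biUnion t := by
      intro b hb
      obtain ⟨k, hk, x, hx, rfl⟩ := Finset.mem_mul.1 hb
      obtain ⟨p, hp, hpx⟩ := Finset.mem_image.1 hx
      refine Finset.mem_biUnion.2 ⟨p, hp, ?_⟩
      exact Finset.mem_image.2 ⟨k, hk, by rw [hpx]⟩
    calc s.card ≤ 2 * S.card := h1
      _ ≤ (K * S).card := hK S
      _ ≤ (s.biUnion t).card := Finset.card_le_card h2
  obtain ⟨ψ, hinj, hmem⟩ := (Finset.all_card_le_biUnion_card_iff_exists_injective t).1 hall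
  -- choose translate
  have hκ : ∀ p : Γ × Fin 2, ∃ k, k ∈ K ∧ k * p.1 = ψ p := by
    intro p
    obtain ⟨k, hk, hkp⟩ := Finset.mem_image.1 (hmem p)
    exact ⟨k, hk, hkp⟩
  choose κ hκK hκψ using hκ
  set E : Γ → Fin 2 → Set Γ := fun k i => {x | κ (x, i) = k} with hE
  -- for each i, sum over k of m (E k i) = 1
  have hsum : ∀ i : Fin 2, ∑ k ∈ K, m (E k i) = 1 := by
    intro i
    have hcover : (⋃ k ∈ K, E k i) = Set.univ := by
      ext x
      simp only [Set.mem_iUnion, Set.mem_univ, iff_true]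
      exact ⟨κ (x, i), hκK (x, i), rfl⟩
    have hdisj : ∀ k ∈ K, ∀ k' ∈ K, k ≠ k' → Disjoint (E k i) (E k' i) := by
      intro k _ k' _ hkk'
      rw [Set.disjoint_left]
      rintro x rfl rfl; exact hkk' rfl
    rw [← fapm_sum hm K (fun k => E k i) hdisj, hcover, hm.2.2.1]
  -- images pairwise disjoint
  set G : Γ × Fin 2 → Set Γ := fun p => (p.1 * ·) '' (E p.1 p.2) with hG
  have himdisj : ∀ p ∈ K ×ˢ (Finset.univ : Finset (Fin 2)), ∀ q ∈ K ×ˢ (Finset.univ : Finset (Fin 2)),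
      p ≠ q → Disjoint (G p) (G q) := by
    rintro p _ q _ hpq
    rw [Set.disjoint_left]
    rintro z ⟨x, hx, rfl⟩ ⟨y, hy, hyz⟩
    simp only [hE, Set.mem_setOf_eq] at hx hy
    have h1 : ψ (x, p.2) = p.1 * x := by rw [← hx]; exact (hκψ (x, p.2)).symm
    have h2 : ψ (y, q.2) = q.1 * y := by rw [← hy]; exact (hκψ (y, q.2)).symm
    have heq : ψ (x, p.2) = ψ (y, q.2) := by rw [h1, h2]; exact hyz.symm
    have hxy := hinj heq
    obtain ⟨hx2, hp2⟩ := Prod.ext_iff.mp hxy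
    subst hx2
    have hp1 : p.1 = q.1 := by rw [← hx, ← hy, hp2]
    exact hpq (Prod.ext hp1 hp2)
  have hsum2 : ∑ p ∈ K ×ˢ (Finset.univ : Finset (Fin 2)), m (G p) = 2 := by
    rw [Finset.sum_product]
    have : ∀ k i, m (G (k, i)) = m (E k i) := fun k i => hm.2.2.2.2 k (E k i)
    simp only [this]
    rw [Finset.sum_comm]
    simp [hsum]
  have hle : ∑ p ∈ K ×ˢ (Finset.univ : Finset (Fin 2)), m (G p) ≤ 1 := by
    rw [← fapm_sum hm _ _ himdisj]
    calc m (⋃ p ∈ K ×ˢ (Finset.univ : Finset (Fin 2)), G p) ≤ m Set.univ := fapm_mono hm (by simp)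
      _ = 1 := hm.2.2.1
  rw [hsum2] at hle
  linarith

lemma folner [DecidableEq Γ] (hm : IsInvFapm m) (K : Finset Γ) (n : ℕ) :
    ∃ S : Finset Γ, S.Nonempty ∧ (n + 1) * (K * S).card ≤ (n + 2) * S.card := by
  by_contra hcon
  push_neg at hcon
  set K1 : Finset Γ := insert 1 K with hK1
  have hK1ne : K1.Nonempty := ⟨1, Finset.mem_insert_self 1 K⟩
  have hKsub : K ⊆ K1 := Finset.subset_insert 1 K
  have hbase : ∀ S : Finset Γ, S.Nonempty → (n + 2) * S.card < (n + 1) * (K1 * S).card := by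
    intro S hS
    calc (n + 2) * S.card < (n + 1) * (K * S).card := hcon S hS
      _ ≤ (n + 1) * (K1 * S).card :=
        Nat.mul_le_mul_left _ (Finset.card_le_card (Finset.mul_subset_mul_right hKsub))
  have hiter : ∀ M : ℕ, 1 ≤ M → ∀ S : Finset Γ, S.Nonempty →
      (n + 2) ^ M * S.card < (n + 1) ^ M * (K1 ^ M * S).card := by
    intro M hM
    induction M, hM using Nat.le_induction with
    | base => intro S hS; simpa using hbase S hS
    | succ M hM ih =>
      intro S hS
      have h1 := hbase S hS
      have h2 := ih (K1 * S) (hK1ne.mul hS)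
      calc (n + 2) ^ (M + 1) * S.card = (n + 2) ^ M * ((n + 2) * S.card) := by ring
        _ ≤ (n + 2) ^ M * ((n + 1) * (K1 * S).card) :=
          Nat.mul_le_mul_left _ (le_of_lt h1)
        _ = (n + 1) * ((n + 2) ^ M * (K1 * S).card) := by ring
        _ < (n + 1) * ((n + 1) ^ M * (K1 ^ M * (K1 * S)).card) :=
          mul_lt_mul_of_pos_left h2 (Nat.succ_pos n)
        _ = (n + 1) ^ (M + 1) * (K1 ^ (M + 1) * S).card := by
          have hset : K1 ^ (M + 1) * S = K1 ^ M * (K1 * S) := by rw [pow_succ, mul_assoc]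
          rw [hset]; ring
  -- choose M with 2 * (n+1)^M ≤ (n+2)^M
  obtain ⟨M, hM⟩ : ∃ M : ℕ, (2 : ℝ) < (((n : ℝ) + 2) / ((n : ℝ) + 1)) ^ M := by
    apply pow_unbounded_of_one_lt
    rw [lt_div_iff₀ (by positivity)]
    linarith
  have hMnat : 2 * (n + 1) ^ M ≤ (n + 2) ^ M := by
    have h1 : (0:ℝ) < ((n:ℝ)+1)^M := by positivity
    rw [div_pow, lt_div_iff₀ h1] at hM
    have : (2:ℝ) * ((n:ℝ)+1)^M < ((n:ℝ)+2)^M := by linarith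
    have hcast : ((2 * (n+1)^M : ℕ) : ℝ) < (((n+2)^M : ℕ) : ℝ) := by push_cast; linarith
    exact_mod_cast le_of_lt hcast
  have hM1 : 1 ≤ M := by
    rcases Nat.eq_zero_or_pos M with rfl | h
    · simp at hM
    · exact h
  refine no_doubling hm (K1 ^ M) fun S => ?_
  rcases S.eq_empty_or_nonempty with rfl | hS
  · simp
  · have h1 := hiter M hM1 S hS
    have h2 : 2 * (n + 1) ^ M * S.card ≤ (n + 2) ^ M * S.card :=
      Nat.mul_le_mul_right _ hMnat
    have h3 : (n + 1) ^ M * (2 * S.card) < (n + 1) ^ M * (K1 ^ M * S).card := by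
      calc (n + 1) ^ M * (2 * S.card) = 2 * (n + 1) ^ M * S.card := by ring
        _ ≤ (n + 2) ^ M * S.card := h2
        _ < (n + 1) ^ M * (K1 ^ M * S).card := h1
    exact le_of_lt (Nat.lt_of_mul_lt_mul_left h3)

lemma card_filter_le_add {α : Type*} [DecidableEq α] (S1 S2 : Finset α) (p : α → Prop)
    [DecidablePred p] : (S1.filter p).card ≤ (S2.filter p).card + (S1 \ S2).card := by
  calc (S1.filter p).card ≤ ((S2.filter p) ∪ (S1 \ S2)).card := by
        apply Finset.card_le_card
        intro a ha
        rw [Finset.mem_filter] at ha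
        by_cases h : a ∈ S2
        · exact Finset.mem_union_left _ (Finset.mem_filter.2 ⟨h, ha.2⟩)
        · exact Finset.mem_union_right _ (Finset.mem_sdiff.2 ⟨ha.1, h⟩)
    _ ≤ _ := Finset.card_union_le _ _

lemma exists_good_F [DecidableEq Γ] [Countable Γ] (hamen : ∃ m : Set Γ → ℝ, IsInvFapm m)
    (A B : Set Γ) (hAB : ∀ m : Set Γ → ℝ, IsInvFapm m → m A < m B) :
    ∃ F : Finset Γ, F.Nonempty ∧
      ∀ x : Γ, (F.filter fun f => f * x ∈ A).card ≤ (F.filter fun f => f * x ∈ B).card := by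
  by_contra hfail
  push_neg at hfail
  obtain ⟨m0, hm0⟩ := hamen
  obtain ⟨g, hg⟩ := exists_surjective_nat Γ
  set K : ℕ → Finset Γ := fun k => insert 1 ((Finset.range k).image g) with hK
  have hfol : ∀ k : ℕ, ∃ S : Finset Γ, S.Nonempty ∧
      (k + 1) * (K k * S).card ≤ (k + 2) * S.card := fun k => folner hm0 (K k) k
  choose S hSne hScard using hfol
  have hx : ∀ k : ℕ, ∃ x : Γ,
      ((S k).filter fun f => f * x ∈ B).card < ((S k).filter fun f => f * x ∈ A).card := by
    intro k
    obtain ⟨x, hx⟩ := hfail (S k) (hSne k)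
    exact ⟨x, hx⟩
  choose x hxlt using hx
  have hSpos : ∀ k, (0 : ℝ) < ((S k).card : ℝ) := fun k => by
    exact_mod_cast Finset.card_pos.2 (hSne k)
  set u : ℕ → Set Γ → ℝ :=
    fun k E => (((S k).filter fun f => f * x k ∈ E).card : ℝ) / ((S k).card : ℝ) with hu
  set U : Ultrafilter ℕ := Ultrafilter.of atTop with hU
  have hUle : (U : Filter ℕ) ≤ atTop := Ultrafilter.of_le atTop
  have hlim : ∀ E : Set Γ, ∃ c : ℝ, c ∈ Icc (0:ℝ) 1 ∧
      Tendsto (fun k => u k E) U (𝓝 c) := by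
    intro E
    have hmem : ∀ k, u k E ∈ Icc (0:ℝ) 1 := by
      intro k
      constructor
      · have : (0:ℝ) ≤ (((S k).filter fun f => f * x k ∈ E).card : ℝ) := by positivity
        exact div_nonneg this (le_of_lt (hSpos k))
      · rw [hu]
        simp only
        rw [div_le_one (hSpos k)]
        exact_mod_cast Finset.card_le_card (Finset.filter_subset _ _)
    have hle : (U.map fun k => u k E : Filter ℝ) ≤ Filter.principal (Icc 0 1) := by
      rw [Filter.le_principal_iff]
      exact Filter.mem_map.2 (Filter.univ_mem' hmem)
    obtain ⟨c, hc, hcle⟩ := isCompact_Icc.ultrafilter_le_nhds (U.map fun k => u k E) hle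
    exact ⟨c, hc, hcle⟩
  set m : Set Γ → ℝ := fun E => (hlim E).choose with hm
  have hmtend : ∀ E, Tendsto (fun k => u k E) U (𝓝 (m E)) := fun E => (hlim E).choose_spec.2
  have hmIcc : ∀ E, m E ∈ Icc (0:ℝ) 1 := fun E => (hlim E).choose_spec.1
  -- additivity
  have hadd : ∀ E F : Set Γ, Disjoint E F → m (E ∪ F) = m E + m F := by
    intro E F hEF
    have huadd : ∀ k, u k (E ∪ F) = u k E + u k F := by
      intro k
      have hfd : Disjoint ((S k).filter fun f => f * x k ∈ E)
          ((S k).filter fun f => f * x k ∈ F) := by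
        rw [Finset.disjoint_filter]
        intro f _ hE hF
        exact Set.disjoint_left.1 hEF hE hF
      simp only [hu]
      rw [← add_div]
      congr 1
      norm_cast
      rw [← Finset.card_union_of_disjoint hfd, ← Finset.filter_or]
      apply congrArg Finset.card
      ext f
      simp only [Finset.mem_filter, Set.mem_union]
    have h2 := (hmtend E).add (hmtend F)
    refine tendsto_nhds_unique (hmtend (E ∪ F)) ?_
    have : (fun k => u k E + u k F) = fun k => u k (E ∪ F) := by
      funext k; rw [huadd k]
    rwa [this] at h2
  -- univ
  have huniv : m Set.univ = 1 := by
    have huu : ∀ k, u k Set.univ = 1 := by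
      intro k
      simp only [hu, Set.mem_univ, Finset.filter_true]
      exact div_self (ne_of_gt (hSpos k))
    refine tendsto_nhds_unique (hmtend Set.univ) ?_
    have : (fun k => u k Set.univ) = fun _ => (1:ℝ) := funext huu
    rw [this]
    exact tendsto_const_nhds
  -- invariance
  have hinv : ∀ (γ : Γ) (E : Set Γ), m ((γ * ·) '' E) = m E := by
    intro γ E
    have hfilt : ∀ k, ((S k).filter fun f => f * x k ∈ (γ * ·) '' E) =
        ((S k).filter fun f => (γ⁻¹ * f) * x k ∈ E) := by
      intro k
      apply Finset.filter_congr
      intro f _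
      constructor
      · rintro ⟨w, hw, hwe⟩
        have hwe' : γ * w = f * x k := hwe
        have hwq : γ⁻¹ * f * x k = w := by rw [mul_assoc, ← hwe']; group
        rwa [hwq]
      · intro h
        exact ⟨γ⁻¹ * f * x k, h, by group⟩
    have htrans : ∀ k, ((S k).filter fun f => (γ⁻¹ * f) * x k ∈ E).card =
        ((γ⁻¹ • S k).filter fun f => f * x k ∈ E).card := by
      intro k
      have himg : γ⁻¹ • S k = (S k).image (fun f => γ⁻¹ * f) := rfl
      rw [himg, Finset.filter_image]
      rw [Finset.card_image_of_injective _ fun a b hab => mul_left_cancel hab]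
    -- eventual bound
    have hev : ∀ᶠ k in (atTop : Filter ℕ), |u k ((γ * ·) '' E) - u k E| ≤ 1 / ((k:ℝ) + 1) := by
      obtain ⟨j, hj⟩ := hg γ⁻¹
      rw [eventually_atTop]
      refine ⟨j + 1, fun k hk => ?_⟩
      have hγK : γ⁻¹ ∈ K k := by
        rw [hK]
        exact Finset.mem_insert_of_mem (Finset.mem_image.2 ⟨j, Finset.mem_range.2 hk, hj⟩)
      have h1K : (1:Γ) ∈ K k := Finset.mem_insert_self _ _
      have hsub1 : γ⁻¹ • S k ⊆ K k * S k := by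
        intro a ha
        rw [Finset.mem_smul_finset] at ha
        obtain ⟨b, hb, rfl⟩ := ha
        exact Finset.mul_mem_mul hγK hb
      have hsub2 : S k ⊆ K k * S k := by
        intro a ha
        have := Finset.mul_mem_mul h1K ha
        rwa [one_mul] at this
      have hcs : (γ⁻¹ • S k).card = (S k).card := Finset.card_smul_finset _ _
      set D : ℕ := (K k * S k).card - (S k).card with hD
      have hd1 : ((γ⁻¹ • S k) \ S k).card ≤ D := by
        calc ((γ⁻¹ • S k) \ S k).card ≤ ((K k * S k) \ S k).card :=
              Finset.card_le_card (Finset.sdiff_subset_sdiff hsub1 le_rfl)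
          _ = D := by rw [Finset.card_sdiff_of_subset hsub2]
      have hd2 : (S k \ (γ⁻¹ • S k)).card ≤ D := by
        calc (S k \ (γ⁻¹ • S k)).card ≤ ((K k * S k) \ (γ⁻¹ • S k)).card :=
              Finset.card_le_card (Finset.sdiff_subset_sdiff hsub2 le_rfl)
          _ = D := by rw [Finset.card_sdiff_of_subset hsub1, hcs]
      set c1 : ℕ := ((γ⁻¹ • S k).filter fun f => f * x k ∈ E).card with hc1
      set c2 : ℕ := ((S k).filter fun f => f * x k ∈ E).card with hc2
      have hcc1 : c1 ≤ c2 + D := by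
        calc c1 ≤ c2 + ((γ⁻¹ • S k) \ S k).card := card_filter_le_add _ _ _
          _ ≤ c2 + D := Nat.add_le_add_left hd1 _
      have hcc2 : c2 ≤ c1 + D := by
        calc c2 ≤ c1 + (S k \ (γ⁻¹ • S k)).card := card_filter_le_add _ _ _
          _ ≤ c1 + D := Nat.add_le_add_left hd2 _
      have habs : |(c1 : ℝ) - (c2 : ℝ)| ≤ (D : ℝ) := by
        rw [abs_sub_le_iff]
        constructor
        · have : (c1 : ℝ) ≤ (c2 : ℝ) + (D : ℝ) := by exact_mod_cast hcc1
          linarith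
        · have : (c2 : ℝ) ≤ (c1 : ℝ) + (D : ℝ) := by exact_mod_cast hcc2
          linarith
      have hDS : ((k:ℝ) + 1) * (D : ℝ) ≤ ((S k).card : ℝ) := by
        have hsc : (S k).card ≤ (K k * S k).card := Finset.card_le_card hsub2
        have hcast : (D : ℝ) = ((K k * S k).card : ℝ) - ((S k).card : ℝ) := by
          rw [hD, Nat.cast_sub hsc]
        have hSc : ((k:ℝ) + 1) * ((K k * S k).card : ℝ) ≤ ((k:ℝ) + 2) * ((S k).card : ℝ) := by
          exact_mod_cast hScard k
        rw [hcast]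
        nlinarith [hSpos k]
      have hueq : u k ((γ * ·) '' E) = (c1 : ℝ) / ((S k).card : ℝ) := by
        simp only [hu]
        rw [hfilt k, htrans k]
      have hueq2 : u k E = (c2 : ℝ) / ((S k).card : ℝ) := rfl
      rw [hueq, hueq2, div_sub_div_same, abs_div, abs_of_pos (hSpos k), div_le_div_iff₀ (hSpos k) (by positivity), one_mul]
      calc |(c1:ℝ) - (c2:ℝ)| * ((k:ℝ) + 1) ≤ (D:ℝ) * ((k:ℝ)+1) := by
            apply mul_le_mul_of_nonneg_right habs (by positivity)
        _ ≤ ((S k).card : ℝ) := by rw [mul_comm] at hDS; exact hDS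
    -- squeeze
    have h0 : Tendsto (fun k => u k ((γ * ·) '' E) - u k E) U (𝓝 0) := by
      apply squeeze_zero_norm' (hev.filter_mono hUle)
      exact tendsto_one_div_add_atTop_nhds_zero_nat.mono_left hUle
    refine tendsto_nhds_unique (hmtend ((γ * ·) '' E)) ?_
    have h2 := (hmtend E).add h0
    rw [add_zero] at h2
    have : (fun k => u k E + (u k ((γ * ·) '' E) - u k E)) = fun k => u k ((γ * ·) '' E) := by
      funext k; ring
    rwa [this] at h2
  -- m B ≤ m A
  have hBA : m B ≤ m A := by
    refine le_of_tendsto_of_tendsto' (hmtend B) (hmtend A) fun k => ?_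
    have h := le_of_lt (hxlt k)
    simp only [hu]
    apply div_le_div_of_nonneg_right ?_ (hSpos k).le
    exact_mod_cast h
  have : IsInvFapm m :=
    ⟨fun E => (hmIcc E).1, fun E => (hmIcc E).2, huniv, hadd, hinv⟩
  exact absurd (hAB m this) (not_lt.2 hBA)

lemma hall_count [DecidableEq Γ] (F : Finset Γ) (hFne : F.Nonempty) (A B : Set Γ)
    (hpt : ∀ x : Γ, (F.filter fun f => f * x ∈ A).card ≤ (F.filter fun f => f * x ∈ B).card)
    (S : Finset Γ) (hS : ↑S ⊆ A) :
    S.card ≤ (((F * F⁻¹) * S).filter (· ∈ B)).card := by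
  set X : Finset Γ := F⁻¹ * S with hX
  set N : Finset Γ := ((F * F⁻¹) * S).filter (· ∈ B) with hN
  -- lower bound
  have h1 : F.card * S.card ≤ (X.sigma fun x => F.filter fun f => f * x ∈ (↑S : Set Γ)).card := by
    rw [← Finset.card_product]
    apply Finset.card_le_card_of_injOn (fun p => ⟨p.1⁻¹ * p.2, p.1⟩)
    · rintro ⟨f, s⟩ hp
      rw [Finset.mem_coe, Finset.mem_product] at hp
      rw [Finset.mem_coe, Finset.mem_sigma]
      constructor
      · exact Finset.mul_mem_mul (Finset.inv_mem_inv hp.1) hp.2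
      · rw [Finset.mem_filter]
        refine ⟨hp.1, ?_⟩
        have : f * (f⁻¹ * s) = s := by group
        rw [this]
        exact hp.2
    · rintro ⟨f, s⟩ _ ⟨f', s'⟩ _ h
      simp only [Sigma.mk.inj_iff] at h
      obtain ⟨h1, h2⟩ := h
      have hf : f = f' := eq_of_heq h2
      subst hf
      have hs : s = s' := mul_left_cancel (a := f⁻¹) h1
      simp [hs]
  -- S ⊆ A
  have h2 : (X.sigma fun x => F.filter fun f => f * x ∈ (↑S : Set Γ)).card ≤
      (X.sigma fun x => F.filter fun f => f * x ∈ A).card := by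
    apply Finset.card_le_card
    rintro ⟨x, f⟩ hp
    rw [Finset.mem_sigma, Finset.mem_filter] at hp ⊢
    exact ⟨hp.1, hp.2.1, hS hp.2.2⟩
  -- pointwise
  have h3 : (X.sigma fun x => F.filter fun f => f * x ∈ A).card ≤
      (X.sigma fun x => F.filter fun f => f * x ∈ B).card := by
    rw [Finset.card_sigma, Finset.card_sigma]
    exact Finset.sum_le_sum fun x _ => hpt x
  -- upper bound
  have h4 : (X.sigma fun x => F.filter fun f => f * x ∈ B).card ≤ N.card * F.card := by
    rw [← Finset.card_product]
    apply Finset.card_le_card_of_injOn (fun p => (p.2 * p.1, p.2))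
    · rintro ⟨x, f⟩ hp
      rw [Finset.mem_coe, Finset.mem_sigma, Finset.mem_filter] at hp
      rw [Finset.mem_coe, Finset.mem_product]
      constructor
      · rw [hN, Finset.mem_filter]
        refine ⟨?_, hp.2.2⟩
        have : F * F⁻¹ * S = F * (F⁻¹ * S) := mul_assoc _ _ _
        rw [this]
        exact Finset.mul_mem_mul hp.2.1 hp.1
      · exact hp.2.1
    · rintro ⟨x, f⟩ _ ⟨x', f'⟩ _ h
      simp only [Prod.mk.injEq] at h
      obtain ⟨h1, rfl⟩ := h
      have : x = x' := mul_left_cancel h1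
      simp [this]
  have hFpos : 0 < F.card := Finset.card_pos.2 hFne
  have : F.card * S.card ≤ N.card * F.card := le_trans h1 (le_trans h2 (le_trans h3 h4))
  rw [mul_comm (N.card)] at this
  exact Nat.le_of_mul_le_mul_left this hFpos

end AuxForStmt0

section MainStmt0
open Filter Topology
open scoped Pointwise Classical

/-- Let `Γ` be a countable amenable group and `A, B ⊆ Γ` be such that
`m(A) < m(B)` for every `Γ`-invariant finitely additive probability measure `m` on `Γ`.
Then there are `n ≥ 1`, a partition `A = A₁ ⊔ ⋯ ⊔ Aₙ` and `γ₁, …, γₙ ∈ Γ` such that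
`γ₁A₁, …, γₙAₙ` are pairwise disjoint and contained in `B`. -/
theorem stmt0 {Γ : Type*} [Group Γ] [Countable Γ]
    (hamen : ∃ m : Set Γ → ℝ, IsInvFapm m)
    (A B : Set Γ)
    (hAB : ∀ m : Set Γ → ℝ, IsInvFapm m → m A < m B) :
    ∃ (n : ℕ) (P : Fin n → Set Γ) (γ : Fin n → Γ),
      1 ≤ n ∧
      (Pairwise fun i j => Disjoint (P i) (P j)) ∧
      (⋃ i, P i) = A ∧
      (Pairwise fun i j => Disjoint ((γ i * ·) '' P i) ((γ j * ·) '' P j)) ∧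
      ∀ i, (γ i * ·) '' P i ⊆ B := by
  classical
  obtain ⟨F, hFne, hpt⟩ := exists_good_F hamen A B hAB
  set D : Finset Γ := F * F⁻¹ with hD
  have hDne : D.Nonempty := hFne.mul (hFne.inv)
  -- the Hall family
  set t : A → Finset Γ := fun a => (D.image (· * (a : Γ))).filter (· ∈ B) with ht
  have hall : ∀ s : Finset A, s.card ≤ (s.biUnion t).card := by
    intro s
    set S : Finset Γ := s.image Subtype.val with hS
    have hcardS : S.card = s.card := Finset.card_image_of_injective _ Subtype.val_injective
    have hSA : ↑S ⊆ A := by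
      intro z hz
      rw [hS] at hz
      simp only [Finset.coe_image, Set.mem_image] at hz
      obtain ⟨a, _, rfl⟩ := hz
      exact a.2
    have hkey := hall_count F hFne A B hpt S hSA
    have hsub : ((D * S).filter (· ∈ B)) ⊆ s.biUnion t := by
      intro b hb
      rw [Finset.mem_filter] at hb
      obtain ⟨hbDS, hbB⟩ := hb
      obtain ⟨d, hd, v, hv, rfl⟩ := Finset.mem_mul.1 hbDS
      rw [hS] at hv
      obtain ⟨a, ha, rfl⟩ := Finset.mem_image.1 hv
      refine Finset.mem_biUnion.2 ⟨a, ha, ?_⟩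
      rw [ht, Finset.mem_filter]
      exact ⟨Finset.mem_image.2 ⟨d, hd, rfl⟩, hbB⟩
    calc s.card = S.card := hcardS.symm
      _ ≤ ((D * S).filter (· ∈ B)).card := hkey
      _ ≤ (s.biUnion t).card := Finset.card_le_card hsub
  obtain ⟨φ, hφinj, hφmem⟩ := (Finset.all_card_le_biUnion_card_iff_exists_injective t).1 hall
  -- choose the translating element for each a
  have hchoice : ∀ a : A, ∃ d : Γ, d ∈ D ∧ d * (a : Γ) = φ a := by
    intro a
    have := hφmem a
    rw [ht, Finset.mem_filter] at this
    obtain ⟨hmem, _⟩ := this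
    obtain ⟨d, hd, hda⟩ := Finset.mem_image.1 hmem
    exact ⟨d, hd, hda⟩
  choose κ hκD hκφ using hchoice
  have hφB : ∀ a : A, φ a ∈ B := by
    intro a
    have := hφmem a
    rw [ht, Finset.mem_filter] at this
    exact this.2
  set n : ℕ := D.card with hn
  set e : ↥D ≃ Fin n := D.equivFin with he
  refine ⟨n, fun i => {x : Γ | ∃ hx : x ∈ A, e ⟨κ ⟨x, hx⟩, hκD ⟨x, hx⟩⟩ = i},
    fun i => ((e.symm i : ↥D) : Γ), ?_, ?_, ?_, ?_, ?_⟩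
  · exact Finset.card_pos.2 hDne
  · intro i j hij
    rw [Set.disjoint_left]
    rintro x ⟨hx1, hi⟩ ⟨hx2, hj⟩
    apply hij
    rw [← hi, ← hj]
  · ext x
    simp only [Set.mem_iUnion, Set.mem_setOf_eq]
    constructor
    · rintro ⟨i, hx, _⟩; exact hx
    · intro hx; exact ⟨e ⟨κ ⟨x, hx⟩, hκD ⟨x, hx⟩⟩, hx, rfl⟩
  · intro i j hij
    rw [Set.disjoint_left]
    rintro z ⟨x, ⟨hx, hi⟩, rfl⟩ ⟨y, ⟨hy, hj⟩, hyz⟩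
    -- identify the translates with φ
    have hgi : ((e.symm i : ↥D) : Γ) = κ ⟨x, hx⟩ := by
      rw [← hi, Equiv.symm_apply_apply]
    have hgj : ((e.symm j : ↥D) : Γ) = κ ⟨y, hy⟩ := by
      rw [← hj, Equiv.symm_apply_apply]
    have hzx : ((e.symm i : ↥D) : Γ) * x = φ ⟨x, hx⟩ := by rw [hgi]; exact hκφ ⟨x, hx⟩
    have hzy : ((e.symm j : ↥D) : Γ) * y = φ ⟨y, hy⟩ := by rw [hgj]; exact hκφ ⟨y, hy⟩
    have hφeq : φ ⟨x, hx⟩ = φ ⟨y, hy⟩ := by rw [← hzx, ← hzy]; exact hyz.symm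
    have hxy := hφinj hφeq
    have hxy' : x = y := congrArg Subtype.val hxy
    subst hxy'
    apply hij
    rw [← hi, ← hj]
  · rintro i z ⟨x, ⟨hx, hi⟩, rfl⟩
    have hgi : ((e.symm i : ↥D) : Γ) = κ ⟨x, hx⟩ := by
      rw [← hi, Equiv.symm_apply_apply]
    have hfin : ((e.symm i : ↥D) : Γ) * x = φ ⟨x, hx⟩ := by rw [hgi]; exact hκφ ⟨x, hx⟩
    show ((e.symm i : ↥D) : Γ) * x ∈ B
    rw [hfin]
    exact hφB ⟨x, hx⟩

end MainStmt0
end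

section
/- Let α be an action of a countable group Γ by homeomorphisms on a nonempty compact Hausdorff 0-dimensional space X such that M(α) = ∅. Then α has dynamical comparison if and only if α is minimal and a ≤ b for all nonzero a, b ∈ T(α). -/
open MeasureTheory Set
open scoped ENNReal

/-! ### Auxiliary development for the proof -/

section AuxProof

open scoped Classical

variable {Γ : Type*} [Group Γ] {X : Type*} [TopologicalSpace X]

private lemma contNat2 {f g : X → ℕ} (hf : Continuous f) (hg : Continuous g)
    (F : ℕ → ℕ → ℕ) : Continuous fun x => F (f x) (g x) :=
  (continuous_of_discreteTopology (f := fun p : ℕ × ℕ => F p.1 p.2)).comp (hf.prodMk hg)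

/-- Pointwise minimum of two continuous `ℕ`-valued functions. -/
noncomputable def cmin (f g : C(X, ℕ)) : C(X, ℕ) :=
  ⟨fun x => min (f x) (g x), contNat2 f.continuous g.continuous _⟩

/-- Pointwise truncated difference of two continuous `ℕ`-valued functions. -/
noncomputable def csub (f g : C(X, ℕ)) : C(X, ℕ) :=
  ⟨fun x => f x - g x, contNat2 f.continuous g.continuous _⟩

@[simp] lemma cmin_apply (f g : C(X, ℕ)) (x : X) : cmin f g x = min (f x) (g x) := rfl
@[simp] lemma csub_apply (f g : C(X, ℕ)) (x : X) : csub f g x = f x - g x := rfl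

lemma homeo_one_apply (x : X) : (1 : X ≃ₜ X) x = x := rfl
lemma homeo_mul_apply (g h : X ≃ₜ X) (x : X) : (g * h) x = g (h x) := rfl

variable (α : Γ →* X ≃ₜ X)

lemma actC_apply (γ : Γ) (f : C(X, ℕ)) (x : X) : actC α γ f x = f (α γ⁻¹ x) := rfl

lemma alpha_inv_apply (γ : Γ) (x : X) : α γ⁻¹ (α γ x) = x := by
  rw [map_inv]; exact (α γ).symm_apply_apply x

lemma alpha_apply_inv (γ : Γ) (x : X) : α γ (α γ⁻¹ x) = x := by
  rw [map_inv]; exact (α γ).apply_symm_apply x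

@[simp] lemma actC_one (f : C(X, ℕ)) : actC α 1 f = f := by
  ext x
  rw [actC_apply, inv_one, map_one, homeo_one_apply]

lemma actC_mul (γ δ : Γ) (f : C(X, ℕ)) : actC α γ (actC α δ f) = actC α (γ * δ) f := by
  ext x
  rw [actC_apply, actC_apply, actC_apply, mul_inv_rev, map_mul, homeo_mul_apply]

lemma actC_sum {ι : Type*} (γ : Γ) (s : Finset ι) (f : ι → C(X, ℕ)) :
    actC α γ (∑ i ∈ s, f i) = ∑ i ∈ s, actC α γ (f i) := by
  ext x
  rw [actC_apply, ContinuousMap.sum_apply, ContinuousMap.sum_apply]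
  exact Finset.sum_congr rfl fun i _ => rfl

lemma mem_image_alpha (γ : Γ) (P : Set X) (x : X) : x ∈ ⇑(α γ) '' P ↔ α γ⁻¹ x ∈ P := by
  constructor
  · rintro ⟨y, hy, rfl⟩; rwa [alpha_inv_apply]
  · intro h; exact ⟨α γ⁻¹ x, h, alpha_apply_inv α γ x⟩

lemma typeRel_refl (f : C(X, ℕ)) : TypeRel α f f := by
  refine ⟨1, fun _ => f, fun _ => 1, ?_, ?_⟩ <;>
    simp [Fin.sum_univ_one]

lemma typeRel_symm {f g : C(X, ℕ)} (h : TypeRel α f g) : TypeRel α g f := by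
  obtain ⟨n, h', γ, hf, hg⟩ := h
  refine ⟨n, fun i => actC α (γ i) (h' i), fun i => (γ i)⁻¹, hg, ?_⟩
  rw [hf]
  refine Finset.sum_congr rfl fun i _ => ?_
  rw [actC_mul, inv_mul_cancel, actC_one]

lemma typeRel_add {f g f' g' : C(X, ℕ)} (h1 : TypeRel α f g) (h2 : TypeRel α f' g') :
    TypeRel α (f + f') (g + g') := by
  obtain ⟨m, h, γ, hf, hg⟩ := h1
  obtain ⟨n, h', γ', hf', hg'⟩ := h2
  refine ⟨m + n, Fin.append h h', Fin.append γ γ', ?_, ?_⟩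
  · rw [Fin.sum_univ_add]
    simp only [Fin.append_left, Fin.append_right]
    rw [← hf, ← hf']
  · rw [Fin.sum_univ_add]
    simp only [Fin.append_left, Fin.append_right]
    rw [← hg, ← hg']

/-- Riesz decomposition: a continuous `ℕ`-valued function dominated by a finite sum can be
split along the sum. -/
lemma splitC : ∀ (n : ℕ) (b : Fin n → C(X, ℕ)) (a : C(X, ℕ)),
    (∀ x, a x ≤ ∑ i, b i x) →
    ∃ c : Fin n → C(X, ℕ), (∀ i x, c i x ≤ b i x) ∧ a = ∑ i, c i := by
  intro n
  induction n with
  | zero =>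
    intro b a ha
    refine ⟨fun i => i.elim0, fun i => i.elim0, ?_⟩
    ext x
    rw [ContinuousMap.sum_apply]
    have h0 := ha x
    simp only [Finset.univ_eq_empty, Finset.sum_empty] at h0 ⊢
    omega
  | succ n ih =>
    intro b a ha
    have key : ∀ x, a x = cmin a (b 0) x + csub a (cmin a (b 0)) x ∧
        csub a (cmin a (b 0)) x ≤ ∑ i : Fin n, b i.succ x := by
      intro x
      have h1 := ha x
      rw [Fin.sum_univ_succ] at h1
      simp only [csub_apply, cmin_apply]
      omega
    obtain ⟨c', hc', hsum⟩ := ih (fun i => b i.succ) (csub a (cmin a (b 0)))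
      fun x => (key x).2
    refine ⟨Fin.cons (cmin a (b 0)) c', ?_, ?_⟩
    · intro i
      refine Fin.cases ?_ ?_ i
      · intro x; simp
      · intro j x; simpa using hc' j x
    · ext x
      rw [ContinuousMap.sum_apply, Fin.sum_univ_succ]
      simp only [Fin.cons_zero, Fin.cons_succ]
      have h2 : csub a (cmin a (b 0)) x = ∑ i : Fin n, c' i x := by
        rw [hsum, ContinuousMap.sum_apply]
      have h3 := (key x).1
      omega

/-- Riesz refinement: two finite decompositions of the same function admit a common
refinement. -/
lemma refineC : ∀ (m : ℕ) (a : Fin m → C(X, ℕ)) (n : ℕ) (b : Fin n → C(X, ℕ)),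
    (∑ i, a i) = (∑ j, b j) →
    ∃ c : Fin m → Fin n → C(X, ℕ),
      (∀ i, a i = ∑ j, c i j) ∧ (∀ j, b j = ∑ i, c i j) := by
  intro m
  induction m with
  | zero =>
    intro a n b heq
    have hb : ∀ j x, b j x = 0 := by
      intro j x
      have h0 : (∑ j, b j) x = 0 := by
        rw [← heq]
        simp
      rw [ContinuousMap.sum_apply] at h0
      have hle : b j x ≤ ∑ i, b i x :=
        Finset.single_le_sum (f := fun i => b i x) (fun i _ => Nat.zero_le _)
          (Finset.mem_univ j)
      omega
    refine ⟨fun i => i.elim0, fun i => i.elim0, fun j => ?_⟩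
    ext x
    rw [ContinuousMap.sum_apply]
    simp [hb j x]
  | succ m ih =>
    intro a n b heq
    rw [Fin.sum_univ_succ] at heq
    have ha0 : ∀ x, a 0 x ≤ ∑ j, b j x := by
      intro x
      have h1 := congrArg (fun u : C(X, ℕ) => u x) heq
      simp only [ContinuousMap.add_apply, ContinuousMap.sum_apply] at h1
      omega
    obtain ⟨c0, hc0le, hc0sum⟩ := splitC n b (a 0) ha0
    have heq' : (∑ i : Fin m, a i.succ) = ∑ j, csub (b j) (c0 j) := by
      ext x
      have h1 := congrArg (fun u : C(X, ℕ) => u x) heq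
      have h2 := congrArg (fun u : C(X, ℕ) => u x) hc0sum
      simp only [ContinuousMap.add_apply, ContinuousMap.sum_apply] at h1 h2 ⊢
      have h3 : ∑ j, csub (b j) (c0 j) x + ∑ j, c0 j x = ∑ j, b j x := by
        rw [← Finset.sum_add_distrib]
        refine Finset.sum_congr rfl fun j _ => ?_
        have hle := hc0le j x
        simp only [csub_apply]
        omega
      omega
    obtain ⟨c', hrow, hcol⟩ := ih (fun i => a i.succ) n (fun j => csub (b j) (c0 j)) heq'
    refine ⟨Fin.cons c0 c', ?_, ?_⟩
    · intro i
      refine Fin.cases ?_ ?_ i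
      · simpa using hc0sum
      · intro j; simpa using hrow j
    · intro j
      ext x
      rw [ContinuousMap.sum_apply, Fin.sum_univ_succ]
      simp only [Fin.cons_zero, Fin.cons_succ]
      have h4 := congrArg (fun u : C(X, ℕ) => u x) (hcol j)
      simp only [ContinuousMap.sum_apply, csub_apply] at h4
      have hle := hc0le j x
      omega

lemma typeRel_trans {f g k : C(X, ℕ)} (h1 : TypeRel α f g) (h2 : TypeRel α g k) :
    TypeRel α f k := by
  obtain ⟨m, h, γ, hf, hg⟩ := h1
  obtain ⟨n, h', δ, hg', hk⟩ := h2
  obtain ⟨c, hrow, hcol⟩ := refineC m (fun i => actC α (γ i) (h i)) n h'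
    (by rw [← hg, hg'])
  refine ⟨m * n,
    fun t => actC α (γ (finProdFinEquiv.symm t).1)⁻¹
      (c (finProdFinEquiv.symm t).1 (finProdFinEquiv.symm t).2),
    fun t => δ (finProdFinEquiv.symm t).2 * γ (finProdFinEquiv.symm t).1, ?_, ?_⟩
  · calc f = ∑ i, h i := hf
      _ = ∑ p : Fin m × Fin n, actC α (γ p.1)⁻¹ (c p.1 p.2) := by
          rw [Fintype.sum_prod_type]
          refine Finset.sum_congr rfl fun i _ => ?_
          show h i = ∑ y : Fin n, actC α (γ i)⁻¹ (c i y)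
          rw [← actC_sum, ← hrow i, actC_mul, inv_mul_cancel, actC_one]
      _ = _ := (Equiv.sum_comp finProdFinEquiv.symm
            fun p : Fin m × Fin n => actC α (γ p.1)⁻¹ (c p.1 p.2)).symm
  · calc k = ∑ j, actC α (δ j) (h' j) := hk
      _ = ∑ p : Fin m × Fin n, actC α (δ p.2) (c p.1 p.2) := by
          rw [Fintype.sum_prod_type, Finset.sum_comm]
          refine Finset.sum_congr rfl fun j _ => ?_
          show actC α (δ j) (h' j) = ∑ x : Fin m, actC α (δ j) (c x j)
          rw [hcol j, actC_sum]
      _ = ∑ p : Fin m × Fin n,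
            actC α (δ p.2 * γ p.1) (actC α (γ p.1)⁻¹ (c p.1 p.2)) := by
          refine Finset.sum_congr rfl fun p _ => ?_
          rw [actC_mul, mul_inv_cancel_right]
      _ = _ := (Equiv.sum_comp finProdFinEquiv.symm
            fun p : Fin m × Fin n =>
              actC α (δ p.2 * γ p.1) (actC α (γ p.1)⁻¹ (c p.1 p.2))).symm

/-- `TypeRel` is itself an additive congruence. -/
def typeAddCon : AddCon C(X, ℕ) where
  r := TypeRel α
  iseqv := ⟨typeRel_refl α, fun h => typeRel_symm α h, fun h h' => typeRel_trans α h h'⟩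
  add' := fun h h' => typeRel_add α h h'

lemma typeCon_iff (f g : C(X, ℕ)) : typeCon α f g ↔ TypeRel α f g := by
  constructor
  · intro h
    exact ((AddCon.addConGen_le (c := typeAddCon α)).mpr fun x y hxy => hxy) h
  · intro h
    exact AddConGen.Rel.of f g h

lemma cls_eq {f g : C(X, ℕ)} : cls α f = cls α g ↔ TypeRel α f g :=
  ((typeCon α).eq).trans (typeCon_iff α f g)

lemma cls_add (f g : C(X, ℕ)) : cls α (f + g) = cls α f + cls α g := rfl

lemma cls_zero : cls α (0 : C(X, ℕ)) = 0 := rfl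

lemma cls_surjective : Function.Surjective (cls α) := fun a =>
  AddCon.induction_on a fun f => ⟨f, rfl⟩

lemma tle_trans {a b c : TypeSemigroup α} (h1 : tle α a b) (h2 : tle α b c) :
    tle α a c := by
  obtain ⟨d, hd⟩ := h1
  obtain ⟨e, he⟩ := h2
  exact ⟨d + e, by rw [← add_assoc, hd, he]⟩

lemma tle_add {a b c d : TypeSemigroup α} (h1 : tle α a b) (h2 : tle α c d) :
    tle α (a + c) (b + d) := by
  obtain ⟨e, he⟩ := h1
  obtain ⟨e', he'⟩ := h2
  refine ⟨e + e', ?_⟩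
  rw [← he, ← he']
  abel

lemma tle_of_le {f g : C(X, ℕ)} (h : ∀ x, f x ≤ g x) :
    tle α (cls α f) (cls α g) := by
  refine ⟨cls α (csub g f), ?_⟩
  rw [← cls_add]
  congr 1
  ext x
  simp only [ContinuousMap.add_apply, csub_apply]
  have := h x
  omega

lemma cls_eq_zero {f : C(X, ℕ)} : cls α f = 0 ↔ f = 0 := by
  constructor
  · intro h
    have h0 : cls α f = cls α 0 := by rw [h]; rfl
    obtain ⟨n, k, γ, hf, h0'⟩ := (cls_eq α).mp h0
    have hk : ∀ i, k i = (0 : C(X, ℕ)) := by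
      intro i
      have hz : actC α (γ i) (k i) = 0 := by
        ext x
        have h1 := congrArg (fun v : C(X, ℕ) => v x) h0'
        simp only [ContinuousMap.sum_apply, ContinuousMap.zero_apply] at h1
        have hle : actC α (γ i) (k i) x ≤ ∑ t, actC α (γ t) (k t) x :=
          Finset.single_le_sum (f := fun t => actC α (γ t) (k t) x)
            (fun t _ => Nat.zero_le _) (Finset.mem_univ i)
        simp only [ContinuousMap.zero_apply]
        omega
      ext x
      have h2 := congrArg (fun v : C(X, ℕ) => v (α (γ i) x)) hz
      simp only [actC_apply, ContinuousMap.zero_apply] at h2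
      rwa [alpha_inv_apply] at h2
    rw [hf]
    exact Finset.sum_eq_zero fun i _ => hk i
  · rintro rfl
    rfl

/-- The indicator of a clopen set, as a continuous `ℕ`-valued function. -/
noncomputable def ind {A : Set X} (hA : IsClopen A) : C(X, ℕ) :=
  ⟨fun x => if x ∈ A then 1 else 0, by
    refine continuous_if (fun a ha => ?_) continuousOn_const continuousOn_const
    have hfr : frontier {x : X | x ∈ A} = ∅ := hA.frontier_eq
    rw [hfr] at ha
    exact absurd ha (Set.notMem_empty a)⟩

@[simp] lemma ind_apply {A : Set X} (hA : IsClopen A) (x : X) :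
    ind hA x = if x ∈ A then 1 else 0 := rfl

lemma ind_le_one {A : Set X} (hA : IsClopen A) (x : X) : ind hA x ≤ 1 := by
  rw [ind_apply]; split <;> omega

lemma sum_ind_apply {n : ℕ} {P : Fin n → Set X} (hP : ∀ i, IsClopen (P i))
    (hd : Pairwise fun i j => Disjoint (P i) (P j)) (x : X) :
    (∑ i, ind (hP i) x) = if x ∈ ⋃ i, P i then 1 else 0 := by
  by_cases hx : x ∈ ⋃ i, P i
  · rw [if_pos hx]
    obtain ⟨i0, hi0⟩ := Set.mem_iUnion.mp hx
    rw [Finset.sum_eq_single i0]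
    · simp [hi0]
    · intro j _ hj
      have hxj : x ∉ P j := fun hxj => Set.disjoint_left.mp (hd hj) hxj hi0
      simp [hxj]
    · intro h
      exact absurd (Finset.mem_univ i0) h
  · rw [if_neg hx]
    refine Finset.sum_eq_zero fun i _ => ?_
    have hxi : x ∉ P i := fun h => hx (Set.mem_iUnion.mpr ⟨i, h⟩)
    simp [hxi]

lemma actC_ind (γ : Γ) {P : Set X} (hP : IsClopen P)
    (hQ : IsClopen (⇑(α γ) '' P)) : actC α γ (ind hP) = ind hQ := by
  ext x
  rw [actC_apply, ind_apply, ind_apply]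
  by_cases hx : α γ⁻¹ x ∈ P
  · rw [if_pos hx, if_pos ((mem_image_alpha α γ P x).mpr hx)]
  · rw [if_neg hx, if_neg (fun h => hx ((mem_image_alpha α γ P x).mp h))]

lemma tle_of_subequi {A B : Set X} (hA : IsClopen A) (hB : IsClopen B)
    (h : Subequidecomposable α A B) :
    tle α (cls α (ind hA)) (cls α (ind hB)) := by
  obtain ⟨n, P, γ, hP, hd, hU, hd', hsub⟩ := h
  have hQ : ∀ i, IsClopen (⇑(α (γ i)) '' P i) := fun i =>
    ⟨((α (γ i)).isClosed_image).mpr (hP i).1, ((α (γ i)).isOpen_image).mpr (hP i).2⟩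
  have h1 : ind hA = ∑ i, ind (hP i) := by
    ext x
    rw [ContinuousMap.sum_apply, sum_ind_apply hP hd, hU, ind_apply]
  have h3 : TypeRel α (ind hA) (∑ i, actC α (γ i) (ind (hP i))) :=
    ⟨n, fun i => ind (hP i), γ, h1, rfl⟩
  rw [(cls_eq α).mpr h3]
  apply tle_of_le
  intro x
  rw [ContinuousMap.sum_apply]
  have h4 : ∑ i, actC α (γ i) (ind (hP i)) x = ∑ i, ind (hQ i) x :=
    Finset.sum_congr rfl fun i _ => by rw [actC_ind α (γ i) (hP i) (hQ i)]
  rw [h4, sum_ind_apply hQ hd', ind_apply]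
  by_cases hx : x ∈ ⋃ i, ⇑(α (γ i)) '' P i
  · rw [if_pos hx]
    obtain ⟨i, hi⟩ := Set.mem_iUnion.mp hx
    rw [if_pos (hsub i hi)]
  · rw [if_neg hx]
    omega

lemma subequi_of_tle {A B : Set X} (hA : IsClopen A) (hB : IsClopen B)
    (h : tle α (cls α (ind hA)) (cls α (ind hB))) : Subequidecomposable α A B := by
  obtain ⟨c, hc⟩ := h
  obtain ⟨u, rfl⟩ := cls_surjective α c
  rw [← cls_add] at hc
  obtain ⟨n, k, γ, hsum1, hsum2⟩ := (cls_eq α).mp hc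
  have hAle : ∀ x, ind hA x ≤ ∑ i, k i x := by
    intro x
    have h1 := congrArg (fun v : C(X, ℕ) => v x) hsum1
    simp only [ContinuousMap.add_apply, ContinuousMap.sum_apply] at h1
    omega
  obtain ⟨k', hk'le, hk'sum⟩ := splitC n k (ind hA) hAle
  have hP : ∀ i, IsClopen ((⇑(k' i)) ⁻¹' {1}) := fun i =>
    (isClopen_discrete {1}).preimage (k' i).continuous
  have hsA : ∀ x, ∑ i, k' i x = ind hA x := by
    intro x
    have h2 := congrArg (fun v : C(X, ℕ) => v x) hk'sum
    simp only [ContinuousMap.sum_apply] at h2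
    omega
  have hmem : ∀ (i : Fin n) (x : X), x ∈ (⇑(k' i)) ⁻¹' {1} ↔ k' i x = 1 := by
    intro i x
    simp [Set.mem_preimage]
  have hsB : ∀ x, ∑ i, actC α (γ i) (k i) x = ind hB x := by
    intro x
    have h3 := congrArg (fun v : C(X, ℕ) => v x) hsum2
    simp only [ContinuousMap.sum_apply] at h3
    omega
  refine ⟨n, fun i => (⇑(k' i)) ⁻¹' {1}, γ, hP, ?_, ?_, ?_, ?_⟩
  · intro i j hij
    rw [Set.disjoint_left]
    intro x hxi hxj
    have h1 := (hmem i x).mp hxi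
    have h2 := (hmem j x).mp hxj
    have hle : k' i x + k' j x ≤ ∑ t, k' t x := by
      rw [← Finset.sum_pair (f := fun t => k' t x) hij]
      exact Finset.sum_le_sum_of_subset (Finset.subset_univ _)
    have h4 := hsA x
    have h5 := ind_le_one hA x
    omega
  · ext x
    simp only [Set.mem_iUnion]
    constructor
    · rintro ⟨i, hi⟩
      have h1 := (hmem i x).mp hi
      have hle : k' i x ≤ ∑ t, k' t x :=
        Finset.single_le_sum (f := fun t => k' t x) (fun t _ => Nat.zero_le _)
          (Finset.mem_univ i)
      have h2 := hsA x
      by_contra hxA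
      rw [ind_apply, if_neg hxA] at h2
      omega
    · intro hxA
      have h2 := hsA x
      rw [ind_apply, if_pos hxA] at h2
      have hex : ∃ i, k' i x ≠ 0 := by
        by_contra hno
        push_neg at hno
        rw [Finset.sum_eq_zero fun i _ => hno i] at h2
        omega
      obtain ⟨i, hi⟩ := hex
      refine ⟨i, (hmem i x).mpr ?_⟩
      have hle : k' i x ≤ ∑ t, k' t x :=
        Finset.single_le_sum (f := fun t => k' t x) (fun t _ => Nat.zero_le _)
          (Finset.mem_univ i)
      omega
  · intro i j hij
    rw [Set.disjoint_left]
    intro x hxi hxj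
    rw [mem_image_alpha] at hxi hxj
    have h1 := (hmem i _).mp hxi
    have h2 := (hmem j _).mp hxj
    have t1 : 1 ≤ actC α (γ i) (k i) x := by
      rw [actC_apply]
      have := hk'le i (α (γ i)⁻¹ x)
      omega
    have t2 : 1 ≤ actC α (γ j) (k j) x := by
      rw [actC_apply]
      have := hk'le j (α (γ j)⁻¹ x)
      omega
    have hle : actC α (γ i) (k i) x + actC α (γ j) (k j) x
        ≤ ∑ t, actC α (γ t) (k t) x := by
      rw [← Finset.sum_pair (f := fun t => actC α (γ t) (k t) x) hij]
      exact Finset.sum_le_sum_of_subset (Finset.subset_univ _)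
    have h3 := hsB x
    have h4 := ind_le_one hB x
    omega
  · intro i x hx
    rw [mem_image_alpha] at hx
    have h1 := (hmem i _).mp hx
    have t1 : 1 ≤ actC α (γ i) (k i) x := by
      rw [actC_apply]
      have := hk'le i (α (γ i)⁻¹ x)
      omega
    have hle : actC α (γ i) (k i) x ≤ ∑ t, actC α (γ t) (k t) x :=
      Finset.single_le_sum (f := fun t => actC α (γ t) (k t) x)
        (fun t _ => Nat.zero_le _) (Finset.mem_univ i)
    have h3 := hsB x
    by_contra hxB
    rw [ind_apply, if_neg hxB] at h3
    omega

/-- If `X` is a (nonempty) subsingleton then the Dirac measure is an invariant Radon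
probability measure. -/
lemma subsingleton_invRadon [Nonempty X] [Subsingleton X] :
    (invRadon α).Nonempty := by
  letI : MeasurableSpace X := borel X
  haveI : BorelSpace X := ⟨rfl⟩
  inhabit X
  have hsets : ∀ s : Set X, s = ∅ ∨ s = Set.univ := by
    intro s
    rcases s.eq_empty_or_nonempty with h | ⟨x, hx⟩
    · exact Or.inl h
    · right
      rw [Set.eq_univ_iff_forall]
      intro y
      rwa [Subsingleton.elim y x]
  have hopen : ∀ s : Set X, IsOpen s := by
    intro s
    rcases hsets s with h | h <;> simp [h]
  have hcompact : ∀ s : Set X, IsCompact s := by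
    intro s
    have hcl : IsClosed s := ⟨hopen sᶜ⟩
    exact hcl.isCompact
  refine ⟨MeasureTheory.Measure.dirac default, ⟨inferInstance, ?_, ?_⟩⟩
  · haveI : (MeasureTheory.Measure.dirac (default : X)).OuterRegular :=
      ⟨fun A _ r hr => ⟨A, subset_rfl, hopen A, hr⟩⟩
    exact MeasureTheory.Measure.Regular.mk fun U _ r hr =>
      ⟨U, subset_rfl, hcompact U, hr⟩
  · intro γ
    rw [MeasureTheory.Measure.map_dirac' (α γ).continuous.measurable]
    congr 1
    exact Subsingleton.elim _ _

end AuxProof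

/-- Let `α` be an action of a countable group `Γ` by homeomorphisms on a
nonempty compact Hausdorff `0`-dimensional space `X` such that `M(α) = ∅`. Then `α` has
dynamical comparison iff `α` is minimal and `a ≤ b` for all nonzero `a, b ∈ T(α)`. -/
theorem stmt7 {Γ : Type*} [Group Γ] [Countable Γ]
    {X : Type*} [TopologicalSpace X] [CompactSpace X] [T2Space X]
    [TotallyDisconnectedSpace X] [Nonempty X]
    (α : Γ →* (X ≃ₜ X)) (hempty : invRadon α = ∅) :
    DynComparison α ↔
      (IsMinimalAction α ∧ ∀ a b : TypeSemigroup α, a ≠ 0 → b ≠ 0 → tle α a b) := by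
  classical
  constructor
  · intro hcomp
    have hvac : ∀ A B : Set X, IsClopen A → IsClopen B → B.Nonempty →
        Subequidecomposable α A B := by
      intro A B hA hB hBne
      refine hcomp A B hA hB hBne ?_
      rw [hempty]
      intro μ hμ
      exact absurd hμ (Set.notMem_empty μ)
    constructor
    · -- minimality
      intro F hF hFinv
      by_cases hFu : F = Set.univ
      · exact Or.inr hFu
      left
      by_contra hFne
      obtain ⟨x, hx⟩ : (Fᶜ).Nonempty := Set.nonempty_compl.mpr hFu
      obtain ⟨B, hBmem, hxB, hBsub⟩ :=
        isTopologicalBasis_isClopen.exists_subset_of_mem_open hx hF.isOpen_compl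
      obtain ⟨y, hy⟩ : F.Nonempty := Set.nonempty_iff_ne_empty.mpr hFne
      obtain ⟨n, P, γ, hP, hd, hU, hd', hsub⟩ :=
        hvac Set.univ B isClopen_univ hBmem ⟨x, hxB⟩
      have hyU : y ∈ ⋃ i, P i := hU ▸ Set.mem_univ y
      obtain ⟨i, hi⟩ := Set.mem_iUnion.mp hyU
      have h1 : α (γ i) y ∈ B := hsub i ⟨y, hi, rfl⟩
      have h2 : α (γ i) y ∈ F := hFinv (γ i) ⟨y, hy, rfl⟩
      exact (hBsub h1) h2
    · -- full comparison in the type semigroup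
      intro a b ha hb
      by_cases hss : Subsingleton X
      · exfalso
        obtain ⟨μ, hμ⟩ := subsingleton_invRadon α
        rw [hempty] at hμ
        exact hμ
      haveI : Nontrivial X := not_subsingleton_iff_nontrivial.mp hss
      obtain ⟨f, rfl⟩ := cls_surjective α a
      obtain ⟨g, rfl⟩ := cls_surjective α b
      have hg : g ≠ 0 := fun h0 => hb (by rw [h0]; rfl)
      -- the clopen support of g
      have hBg : IsClopen ((⇑g) ⁻¹' {0}ᶜ) :=
        (isClopen_discrete _).preimage g.continuous
      have hBgne : ((⇑g) ⁻¹' {0}ᶜ).Nonempty := by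
        by_contra hcon
        apply hg
        ext z
        have hz : z ∉ (⇑g) ⁻¹' {0}ᶜ := fun h => hcon ⟨z, h⟩
        simpa using hz
      -- two disjoint nonempty clopen pieces of X
      obtain ⟨x, y, hxy⟩ := exists_pair_ne X
      obtain ⟨U, hU, hxU, hyU⟩ := exists_isClopen_of_totally_separated hxy
      have hUc : IsClopen Uᶜ := hU.compl
      -- step : 2·[1_X] ≤ [1_X]
      have step : tle α (cls α (ind (isClopen_univ (X := X))) +
          cls α (ind (isClopen_univ (X := X)))) (cls α (ind (isClopen_univ (X := X)))) := by
        have t1 := tle_of_subequi α isClopen_univ hU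
          (hvac Set.univ U isClopen_univ hU ⟨x, hxU⟩)
        have t2 := tle_of_subequi α isClopen_univ hUc
          (hvac Set.univ Uᶜ isClopen_univ hUc ⟨y, hyU⟩)
        refine tle_trans α (tle_add α t1 t2) ?_
        rw [← cls_add]
        apply tle_of_le
        intro z
        simp only [ContinuousMap.add_apply, ind_apply]
        by_cases hz : z ∈ U <;> simp [hz]
      -- bound on f
      have hfin : (Set.range (⇑f)).Finite :=
        (isCompact_range f.continuous).finite DiscreteTopology.isDiscrete
      obtain ⟨N, hN⟩ := hfin.bddAbove
      have hNle : ∀ z, f z ≤ N := fun z => hN (Set.mem_range_self z)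
      have s1 : tle α (cls α f) (cls α (ContinuousMap.const X (N + 1))) := by
        apply tle_of_le
        intro z
        have := hNle z
        simp only [ContinuousMap.const_apply]
        omega
      have base : tle α (cls α (ContinuousMap.const X 1))
          (cls α (ind (isClopen_univ (X := X)))) := by
        apply tle_of_le
        intro z
        simp
      have s2 : ∀ M : ℕ, tle α (cls α (ContinuousMap.const X (M + 1)))
          (cls α (ind (isClopen_univ (X := X)))) := by
        intro M
        induction M with
        | zero => exact base
        | succ M ihM =>
          have e0 : ContinuousMap.const X (M + 1 + 1) =
              ContinuousMap.const X (M + 1) + ContinuousMap.const X 1 := by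
            ext z
            simp
          rw [e0, cls_add]
          exact tle_trans α (tle_add α ihM base) step
      have t4 : tle α (cls α (ind (isClopen_univ (X := X)))) (cls α (ind hBg)) :=
        tle_of_subequi α isClopen_univ hBg
          (hvac Set.univ _ isClopen_univ hBg hBgne)
      have t5 : tle α (cls α (ind hBg)) (cls α g) := by
        apply tle_of_le
        intro z
        rw [ind_apply]
        by_cases hz : z ∈ (⇑g) ⁻¹' {0}ᶜ
        · rw [if_pos hz]
          have : g z ≠ 0 := hz
          omega
        · rw [if_neg hz]
          omega
      exact tle_trans α (tle_trans α (tle_trans α s1 (s2 N)) t4) t5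
  · rintro ⟨hmin, htle⟩
    intro A B hA hB hBne hmeas
    rcases Set.eq_empty_or_nonempty A with rfl | hAne
    · refine ⟨0, fun i => i.elim0, fun i => i.elim0, fun i => i.elim0, ?_, by simp, ?_,
        fun i => i.elim0⟩
      · intro i j _
        exact i.elim0
      · intro i j _
        exact i.elim0
    · have ha : cls α (ind hA) ≠ 0 := by
        intro h0
        rw [cls_eq_zero α] at h0
        obtain ⟨x0, hx0⟩ := hAne
        have h1 := congrArg (fun v : C(X, ℕ) => v x0) h0
        simp [hx0] at h1
      have hb : cls α (ind hB) ≠ 0 := by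
        intro h0
        rw [cls_eq_zero α] at h0
        obtain ⟨x0, hx0⟩ := hBne
        have h1 := congrArg (fun v : C(X, ℕ) => v x0) h0
        simp [hx0] at h1
      exact subequi_of_tle α hA hB (htle _ _ ha hb)
end

section
/- Let α be an action of a countable group Γ by homeomorphisms on a compact Hausdorff 0-dimensional space X. For all a, b ∈ T(α) the following are equivalent: (1) there exists n ∈ ℕ such that (n+1)a ≤ nb; (2) there exists n ∈ ℕ such that a ≤ nb, and for every state μ ∈ M_∞(α) with μ(b) = 1 one has μ(a) < 1. -/
open MeasureTheory Set
open scoped ENNReal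

namespace S9

variable {M : Type*} [AddCommMonoid M]

/-- auxiliary order -/
def mle (x y : M) : Prop := ∃ c, x + c = y

theorem mle_refl (x : M) : mle x x := ⟨0, add_zero x⟩

theorem mle_trans {x y z : M} (h1 : mle x y) (h2 : mle y z) : mle x z := by
  obtain ⟨c, rfl⟩ := h1; obtain ⟨d, rfl⟩ := h2; exact ⟨c + d, (add_assoc _ _ _).symm⟩

theorem mle_add_left {x y : M} (w : M) (h : mle x y) : mle (w + x) (w + y) := by
  obtain ⟨c, rfl⟩ := h; exact ⟨c, add_assoc _ _ _⟩

theorem mle_add_right {x y : M} (w : M) (h : mle x y) : mle (x + w) (y + w) := by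
  obtain ⟨c, rfl⟩ := h; exact ⟨c, by abel⟩

theorem mle_self_add (x c : M) : mle x (x + c) := ⟨c, rfl⟩

theorem mle_smul {m n : ℕ} (x : M) (h : m ≤ n) : mle (m • x) (n • x) :=
  ⟨(n - m) • x, by rw [← add_nsmul]; congr 1; omega⟩

variable (a b : M)

/-- the "ideal" of elements dominated by a multiple of b -/
def Wb : Set M := {x | ∃ k : ℕ, mle x (k • b)}

variable {a b}

theorem Wb_zero : (0 : M) ∈ Wb b := ⟨0, ⟨0, by simp⟩⟩

theorem Wb_add {x y : M} (hx : x ∈ Wb b) (hy : y ∈ Wb b) : x + y ∈ Wb b := by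
  obtain ⟨k, c, hc⟩ := hx; obtain ⟨l, d, hd⟩ := hy
  exact ⟨k + l, c + d, by rw [add_nsmul, ← hc, ← hd]; abel⟩

theorem Wb_of_mle {x y : M} (h : mle x y) (hy : y ∈ Wb b) : x ∈ Wb b := by
  obtain ⟨k, hk⟩ := hy; exact ⟨k, mle_trans h hk⟩

theorem Wb_smul {x : M} (hx : x ∈ Wb b) (n : ℕ) : n • x ∈ Wb b := by
  induction n with
  | zero => simpa using Wb_zero
  | succ k ih => rw [succ_nsmul]; exact Wb_add ih hx

theorem Wb_b : b ∈ Wb b := ⟨1, by simpa using mle_refl b⟩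

section Core

variable (hab : ∃ N : ℕ, mle a (N • b))
variable (h : ∀ n : ℕ, ¬ ∃ c, (n + 1) • a + c = n • b)

include h in
theorem core {n m : ℕ} (hmn : m < n) {z : M} (hz : z ∈ Wb b)
    (hle : mle (n • a + z) (m • b + z)) : False := by
  have iter : ∀ j : ℕ, mle ((j * n) • a + z) ((j * m) • b + z) := by
    intro j
    induction j with
    | zero => simpa using mle_refl z
    | succ i ih =>
      have h1 : mle (((i + 1) * n) • a + z) ((i * n) • a + (m • b + z)) := by
        have := mle_add_left ((i * n) • a) hle
        refine mle_trans ?_ this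
        rw [add_mul, one_mul, add_nsmul]
        exact ⟨0, by abel⟩
      have h2 : mle ((i * n) • a + (m • b + z)) (((i + 1) * m) • b + z) := by
        have := mle_add_left (m • b) ih
        refine mle_trans ⟨0, by abel⟩ (mle_trans this ?_)
        rw [add_mul, one_mul, add_nsmul]
        exact ⟨0, by abel⟩
      exact mle_trans h1 h2
  obtain ⟨k, c, hc⟩ := hz
  set j := k + 1 with hj
  have h3 : mle ((j * n) • a) ((j * m + k) • b) := by
    have h4 : mle ((j * n) • a + z + c) ((j * m) • b + z + c) := mle_add_right c (iter j)
    have h5 : ((j * m) • b + z + c : M) = (j * m + k) • b := by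
      rw [add_nsmul, add_assoc, hc]
    rw [h5] at h4
    exact mle_trans (mle_trans ⟨z + c, by abel⟩ (mle_refl _)) h4
  have h6 : mle ((j * m + k + 1) • a) ((j * m + k) • b) := by
    refine mle_trans (mle_smul a ?_) h3
    have : m + 1 ≤ n := hmn
    calc j * m + k + 1 ≤ j * m + j := by omega
    _ ≤ j * n := by rw [← mul_add_one]; exact Nat.mul_le_mul_left j this
  exact h (j * m + k) h6

/-- the basic relations among multiples of a and b -/
def Con (p p' q q' : ℕ) : Prop :=
  ∃ z c, z ∈ Wb b ∧ p' • b + q' • a + z + c = p • b + q • a + z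

variable (a b) in
theorem Con_add {p₁ p₁' q₁ q₁' p₂ p₂' q₂ q₂' : ℕ}
    (h1 : Con (a := a) (b := b) p₁ p₁' q₁ q₁') (h2 : Con (a := a) (b := b) p₂ p₂' q₂ q₂') :
    Con (a := a) (b := b) (p₁ + p₂) (p₁' + p₂') (q₁ + q₂) (q₁' + q₂') := by
  obtain ⟨z₁, c₁, hz₁, e₁⟩ := h1
  obtain ⟨z₂, c₂, hz₂, e₂⟩ := h2
  refine ⟨z₁ + z₂, c₁ + c₂, Wb_add hz₁ hz₂, ?_⟩
  have := congrArg₂ (· + ·) e₁ e₂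
  simp only [add_nsmul]
  calc (p₁' • b + p₂' • b) + (q₁' • a + q₂' • a) + (z₁ + z₂) + (c₁ + c₂)
      = (p₁' • b + q₁' • a + z₁ + c₁) + (p₂' • b + q₂' • a + z₂ + c₂) := by abel
    _ = (p₁ • b + q₁ • a + z₁) + (p₂ • b + q₂ • a + z₂) := this
    _ = p₁ • b + p₂ • b + (q₁ • a + q₂ • a) + (z₁ + z₂) := by abel

theorem Con_smul {p p' q q' : ℕ} (j : ℕ) (h1 : Con (a := a) (b := b) p p' q q') :
    Con (a := a) (b := b) (j * p) (j * p') (j * q) (j * q') := by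
  induction j with
  | zero => exact ⟨0, 0, Wb_zero, by simp⟩
  | succ i ih =>
    have := Con_add a b ih h1
    simpa [add_mul, one_mul] using this

include h hab in
theorem conKey {p p' q q' : ℕ} (hc : Con (a := a) (b := b) p p' q q') (hq : q ≤ q') :
    p' + q' ≤ p + q := by
  by_contra hlt
  push_neg at hlt
  obtain ⟨z, c, hz, e⟩ := hc
  obtain ⟨N, hN⟩ := hab
  rcases Nat.lt_or_ge p' p with hp | hp
  · -- p' < p, so q < q' and p - p' < q' - q
    obtain ⟨m, rfl⟩ : ∃ m, p = p' + m := ⟨p - p', by omega⟩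
    obtain ⟨n, rfl⟩ : ∃ n, q' = q + n := ⟨q' - q, by omega⟩
    have hmn : m < n := by omega
    set Z := p' • b + q • a + z with hZ
    have hZW : Z ∈ Wb b :=
      Wb_add (Wb_add (Wb_smul Wb_b p') (Wb_smul (Wb_of_mle hN ⟨N, mle_refl _⟩) q)) hz
    have e' : n • a + Z + c = m • b + Z := by
      rw [hZ]
      calc n • a + (p' • b + q • a + z) + c = p' • b + (q + n) • a + z + c := by
            rw [add_nsmul]; abel
        _ = (p' + m) • b + q • a + z := e
        _ = m • b + (p' • b + q • a + z) := by rw [add_nsmul]; abel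
    exact core h hmn hZW ⟨c, e'⟩
  · -- p ≤ p'
    rcases Nat.lt_or_ge q q' with hq2 | hq2
    · -- q < q', p ≤ p' : n • a + Z ≤ 0 • b + Z
      obtain ⟨n, rfl⟩ : ∃ n, q' = q + n := ⟨q' - q, by omega⟩
      obtain ⟨m, rfl⟩ : ∃ m, p' = p + m := ⟨p' - p, by omega⟩
      have hn : 0 < n := by omega
      set Z := p • b + q • a + z with hZ
      have hZW : Z ∈ Wb b :=
        Wb_add (Wb_add (Wb_smul Wb_b p) (Wb_smul (Wb_of_mle hN ⟨N, mle_refl _⟩) q)) hz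
      have e' : n • a + Z + (m • b + c) = 0 • b + Z := by
        rw [hZ]
        calc n • a + (p • b + q • a + z) + (m • b + c)
            = (p + m) • b + (q + n) • a + z + c := by rw [add_nsmul, add_nsmul]; abel
          _ = p • b + q • a + z := e
          _ = 0 • b + (p • b + q • a + z) := by rw [zero_nsmul, zero_add]
      exact core h hn hZW ⟨m • b + c, e'⟩
    · -- q = q', p < p' : absorption
      obtain rfl : q = q' := le_antisymm hq hq2
      obtain ⟨d, rfl⟩ : ∃ d, p' = p + d := ⟨p' - p, by omega⟩
      have hd : 0 < d := by omega
      set Z := p • b + q • a + z with hZ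
      have hZW : Z ∈ Wb b :=
        Wb_add (Wb_add (Wb_smul Wb_b p) (Wb_smul (Wb_of_mle hN ⟨N, mle_refl _⟩) q)) hz
      have e' : d • b + Z + c = Z := by
        rw [hZ]
        calc d • b + (p • b + q • a + z) + c = (p + d) • b + q • a + z + c := by
              rw [add_nsmul]; abel
          _ = p • b + q • a + z := e
      -- iterate absorption
      have abs : ∀ j : ℕ, (j * d) • b + Z + j • c = Z := by
        intro j
        induction j with
        | zero => simp
        | succ i ih =>
          calc ((i + 1) * d) • b + Z + (i + 1) • c
              = d • b + ((i * d) • b + Z + i • c) + c := by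
                rw [add_mul, one_mul, add_nsmul, succ_nsmul]; abel
            _ = d • b + Z + c := by rw [ih]
            _ = Z := e'
      -- now 1 • a + Z ≤ 0 • b + Z
      have key : mle ((1 : ℕ) • a + Z) ((0 : ℕ) • b + Z) := by
        obtain ⟨cN, hcN⟩ := hN
        have h1 : mle ((1 : ℕ) • a + Z) (N • b + Z) := by
          refine ⟨cN, ?_⟩
          rw [one_nsmul]
          calc a + Z + cN = (a + cN) + Z := by abel
            _ = N • b + Z := by rw [hcN]
        have h2 : mle (N • b + Z) ((N * d) • b + Z) := by
          refine mle_add_right Z (mle_smul b ?_)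
          calc N = N * 1 := (mul_one N).symm
            _ ≤ N * d := Nat.mul_le_mul_left N hd
        have h3 : mle ((N * d) • b + Z) ((0 : ℕ) • b + Z) := by
          refine ⟨N • c, ?_⟩
          rw [zero_nsmul, zero_add]
          exact abs N
        exact mle_trans h1 (mle_trans h2 h3)
      exact core h (by omega : 0 < 1) hZW key


variable (a b) in
/-- lower bound candidates for β -/
noncomputable def LB : Set ℝ :=
  {x | ∃ p p' q q' : ℕ, Con (a := a) (b := b) p p' q q' ∧ q' < q ∧
    x = (((p' : ℝ) - p) / ((q : ℝ) - q'))}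

include h hab in
theorem lb_le_ub {p₁ p₁' q₁ q₁' p₂ p₂' q₂ q₂' : ℕ}
    (h1 : Con (a := a) (b := b) p₁ p₁' q₁ q₁') (hq1 : q₁' < q₁)
    (h2 : Con (a := a) (b := b) p₂ p₂' q₂ q₂') (hq2 : q₂ < q₂') :
    ((p₁' : ℝ) - p₁) / ((q₁ : ℝ) - q₁') ≤ ((p₂ : ℝ) - p₂') / ((q₂' : ℝ) - q₂) := by
  obtain ⟨n₁, rfl⟩ : ∃ n, q₁ = q₁' + n := ⟨q₁ - q₁', by omega⟩
  obtain ⟨n₂, rfl⟩ : ∃ n, q₂' = q₂ + n := ⟨q₂' - q₂, by omega⟩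
  have hn₁ : 0 < n₁ := by omega
  have hn₂ : 0 < n₂ := by omega
  have hcomb := Con_add a b (Con_smul n₂ h1) (Con_smul n₁ h2)
  have hqeq : n₂ * (q₁' + n₁) + n₁ * q₂ = n₂ * q₁' + n₁ * (q₂ + n₂) := by ring
  have hp := conKey hab h hcomb (le_of_eq hqeq)
  have hp2 : n₂ * p₁' + n₁ * p₂' ≤ n₂ * p₁ + n₁ * p₂ := by
    rw [hqeq] at hp
    exact le_of_add_le_add_right hp
  have hp2R : (n₂ : ℝ) * p₁' + n₁ * p₂' ≤ (n₂ : ℝ) * p₁ + n₁ * p₂ := by exact_mod_cast hp2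
  have d1 : (0 : ℝ) < ((q₁' : ℝ) + n₁) - q₁' := by
    push_cast
    have : (0 : ℝ) < n₁ := by exact_mod_cast hn₁
    linarith
  have d2 : (0 : ℝ) < ((q₂ : ℝ) + n₂) - q₂ := by
    push_cast
    have : (0 : ℝ) < n₂ := by exact_mod_cast hn₂
    linarith
  rw [div_le_div_iff₀ (by push_cast at d1 ⊢; linarith) (by push_cast at d2 ⊢; linarith)]
  push_cast
  nlinarith [hp2R]

variable (a b) in
/-- the value to assign to `a` -/
noncomputable def beta : ℝ := max 1 (sSup (LB a b))

theorem one_le_beta : 1 ≤ beta a b := le_max_left _ _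

include hab in
theorem con_base : Con (a := a) (b := b) (Classical.choose hab) 0 0 1 := by
  obtain ⟨c, hc⟩ := Classical.choose_spec hab
  exact ⟨0, c, Wb_zero, by simpa using hc⟩

include h hab in
theorem beta_main {p p' q q' : ℕ} (hc : Con (a := a) (b := b) p p' q q') :
    0 ≤ ((p : ℝ) - p') + ((q : ℝ) - q') * beta a b := by
  set N := Classical.choose hab with hN
  have hbdd : BddAbove (LB a b) := by
    refine ⟨(N : ℝ), ?_⟩
    rintro x ⟨r, r', s, s', hcon, hss, rfl⟩
    have := lb_le_ub hab h hcon hss (con_base hab) (by omega)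
    simpa using this
  rcases lt_trichotomy q' q with hlt | heq | hgt
  · -- q' < q : lower bound
    have hmem : ((p' : ℝ) - p) / ((q : ℝ) - q') ∈ LB a b := ⟨p, p', q, q', hc, hlt, rfl⟩
    have h1 : ((p' : ℝ) - p) / ((q : ℝ) - q') ≤ beta a b :=
      le_trans (le_csSup hbdd hmem) (le_max_right _ _)
    have hd : (0 : ℝ) < (q : ℝ) - q' := by
      have : (q' : ℝ) < q := by exact_mod_cast hlt
      linarith
    rw [div_le_iff₀ hd] at h1
    nlinarith [h1, one_le_beta (a := a) (b := b)]
  · -- q = q'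
    subst heq
    have hkey := conKey hab h hc le_rfl
    have : (p' : ℝ) ≤ p := by exact_mod_cast (by omega : p' ≤ p)
    simp only [sub_self, zero_mul]
    linarith
  · -- q < q' : upper bound
    have hd : (0 : ℝ) < (q' : ℝ) - q := by
      have : (q : ℝ) < q' := by exact_mod_cast hgt
      linarith
    have hkey := conKey hab h hc (by omega)
    have hub1 : (1 : ℝ) ≤ ((p : ℝ) - p') / ((q' : ℝ) - q) := by
      rw [le_div_iff₀ hd]
      have h1 : (p' : ℝ) + q' ≤ (p : ℝ) + q := by exact_mod_cast hkey
      linarith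
    have hub2 : sSup (LB a b) ≤ ((p : ℝ) - p') / ((q' : ℝ) - q) := by
      apply Real.sSup_le _ (le_trans zero_le_one hub1)
      rintro x ⟨r, r', s, s', hcon, hss, rfl⟩
      exact lb_le_ub hab h hcon hss hc hgt
    have hb : beta a b ≤ ((p : ℝ) - p') / ((q' : ℝ) - q) := max_le hub1 hub2
    rw [le_div_iff₀ hd] at hb
    nlinarith [hb]

variable (a b) in
/-- the initial graph -/
def Gamma0 : Set (M × M × ℝ) :=
  {t | ∃ p p' q q' : ℕ,
    t = (p • b + q • a, p' • b + q' • a, ((p : ℝ) - p') + ((q : ℝ) - q') * beta a b)}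

variable (b) in
/-- positivity relation: `y ≾ x` modulo an absorbing element of `Wb` -/
def cone (x y : M) : Prop := ∃ z c, z ∈ Wb b ∧ y + z + c = x + z

theorem cone_refl (x : M) : cone b x x := ⟨0, 0, Wb_zero, by simp⟩

theorem cone_zero (x : M) : cone b x 0 := ⟨0, x, Wb_zero, by simpa using (add_comm 0 x)⟩

theorem cone_add {x y x' y' : M} (h1 : cone b x y) (h2 : cone b x' y') :
    cone b (x + x') (y + y') := by
  obtain ⟨z, c, hz, e⟩ := h1
  obtain ⟨z', c', hz', e'⟩ := h2
  refine ⟨z + z', c + c', Wb_add hz hz', ?_⟩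
  calc y + y' + (z + z') + (c + c') = (y + z + c) + (y' + z' + c') := by abel
    _ = (x + z) + (x' + z') := by rw [e, e']
    _ = x + x' + (z + z') := by abel

theorem cone_smul {x y : M} (h1 : cone b x y) (n : ℕ) : cone b (n • x) (n • y) := by
  induction n with
  | zero => simpa using cone_refl 0
  | succ i ih => rw [succ_nsmul, succ_nsmul]; exact cone_add ih h1

theorem cone_cancel {x y w : M} (hw : w ∈ Wb b) (h1 : cone b (x + w) (y + w)) :
    cone b x y := by
  obtain ⟨z, c, hz, e⟩ := h1
  refine ⟨w + z, c, Wb_add hw hz, ?_⟩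
  calc y + (w + z) + c = y + w + z + c := by abel
    _ = x + w + z := e
    _ = x + (w + z) := by abel

theorem cone_drop {x y w : M} (h1 : cone b x (y + w)) : cone b x y := by
  obtain ⟨z, c, hz, e⟩ := h1
  exact ⟨z, w + c, hz, by calc y + z + (w + c) = y + w + z + c := by abel
    _ = x + z := e⟩

variable (a b) in
/-- partial states (as graphs of group homs) -/
structure Good (Γ : Set (M × M × ℝ)) : Prop where
  g0 : Gamma0 a b ⊆ Γ
  gadd : ∀ s t, s ∈ Γ → t ∈ Γ → s + t ∈ Γ
  gneg : ∀ x y r, (x, y, r) ∈ Γ → (y, x, -r) ∈ Γ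
  gW : ∀ x y r, (x, y, r) ∈ Γ → x ∈ Wb b ∧ y ∈ Wb b
  gpos : ∀ x y r, (x, y, r) ∈ Γ → cone b x y → 0 ≤ r

theorem zero_mem_Gamma0 : ((0 : M), (0 : M), (0 : ℝ)) ∈ Gamma0 a b :=
  ⟨0, 0, 0, 0, by simp⟩

theorem b_mem_Gamma0 : ((b : M), (0 : M), (1 : ℝ)) ∈ Gamma0 a b :=
  ⟨1, 0, 0, 0, by simp⟩

theorem a_mem_Gamma0 : ((a : M), (0 : M), beta a b) ∈ Gamma0 a b :=
  ⟨0, 0, 1, 0, by simp⟩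

theorem kb_mem_Gamma0 (K : ℕ) : ((K • b : M), (0 : M), (K : ℝ)) ∈ Gamma0 a b :=
  ⟨K, 0, 0, 0, by simp⟩

include hab h in
theorem good_Gamma0 : Good a b (Gamma0 a b) := by
  constructor
  · exact fun t ht => ht
  · rintro s t ⟨p₁, p₁', q₁, q₁', rfl⟩ ⟨p₂, p₂', q₂, q₂', rfl⟩
    refine ⟨p₁ + p₂, p₁' + p₂', q₁ + q₂, q₁' + q₂', ?_⟩
    simp only [Prod.mk_add_mk]
    refine congrArg₂ _ ?_ (congrArg₂ _ ?_ ?_)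
    · rw [add_nsmul, add_nsmul]; abel
    · rw [add_nsmul, add_nsmul]; abel
    · push_cast; ring
  · rintro x y r ⟨p, p', q, q', ht⟩
    obtain ⟨h1, h2, h3⟩ : x = p • b + q • a ∧ y = p' • b + q' • a ∧
        r = ((p : ℝ) - p') + ((q : ℝ) - q') * beta a b := by
      simpa [Prod.ext_iff] using ht
    exact ⟨p', p, q', q, by rw [h1, h2, h3]; refine congrArg₂ _ rfl (congrArg₂ _ rfl ?_); ring⟩
  · rintro x y r ⟨p, p', q, q', ht⟩
    obtain ⟨h1, h2, h3⟩ : x = p • b + q • a ∧ y = p' • b + q' • a ∧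
        r = ((p : ℝ) - p') + ((q : ℝ) - q') * beta a b := by
      simpa [Prod.ext_iff] using ht
    have haW : a ∈ Wb b := Wb_of_mle (Classical.choose_spec hab) ⟨Classical.choose hab, mle_refl _⟩
    constructor
    · rw [h1]; exact Wb_add (Wb_smul Wb_b p) (Wb_smul haW q)
    · rw [h2]; exact Wb_add (Wb_smul Wb_b p') (Wb_smul haW q')
  · rintro x y r ⟨p, p', q, q', ht⟩ hcone
    obtain ⟨h1, h2, h3⟩ : x = p • b + q • a ∧ y = p' • b + q' • a ∧
        r = ((p : ℝ) - p') + ((q : ℝ) - q') * beta a b := by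
      simpa [Prod.ext_iff] using ht
    obtain ⟨z, c, hz, e⟩ := hcone
    rw [h1, h2] at e
    rw [h3]
    exact beta_main hab h ⟨z, c, hz, e⟩

theorem Good.mem_smul {Γ : Set (M × M × ℝ)} (G : Good a b Γ) {x y : M} {r : ℝ}
    (hm : (x, y, r) ∈ Γ) (n : ℕ) : (n • x, n • y, n * r) ∈ Γ := by
  induction n with
  | zero => simpa using G.g0 zero_mem_Gamma0
  | succ i ih =>
    have := G.gadd _ _ ih hm
    simp only [Prod.mk_add_mk] at this
    have e1 : (i + 1) • x = i • x + x := succ_nsmul x i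
    have e2 : (i + 1) • y = i • y + y := succ_nsmul y i
    have e3 : ((i : ℝ) + 1) * r = i * r + r := by ring
    rw [e1, e2, show ((i + 1 : ℕ) : ℝ) = (i : ℝ) + 1 by push_cast; ring, e3]
    exact this

theorem Good.funct {Γ : Set (M × M × ℝ)} (G : Good a b Γ) {x y : M} {r s : ℝ}
    (h1 : (x, y, r) ∈ Γ) (h2 : (x, y, s) ∈ Γ) : r = s := by
  have t1 := G.gadd _ _ h1 (G.gneg _ _ _ h2)
  have t2 := G.gadd _ _ h2 (G.gneg _ _ _ h1)
  simp only [Prod.mk_add_mk] at t1 t2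
  have c1 : cone b (x + y) (y + x) := by rw [add_comm y x]; exact cone_refl _
  have p1 := G.gpos _ _ _ t1 c1
  have p2 := G.gpos _ _ _ t2 c1
  linarith


include hab h in
theorem exists_maximal_good :
    ∃ Γ : Set (M × M × ℝ), Good a b Γ ∧
      ∀ Γ' : Set (M × M × ℝ), Good a b Γ' → Γ ⊆ Γ' → Γ' ⊆ Γ := by
  obtain ⟨m, _, hm⟩ := zorn_subset_nonempty {Γ : Set (M × M × ℝ) | Good a b Γ}
    (fun c hc hchain hne => by
      obtain ⟨Γ₁, hΓ₁⟩ := hne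
      refine ⟨⋃₀ c, ?_, fun s hs t ht => Set.mem_sUnion.2 ⟨s, hs, ht⟩⟩
      constructor
      · exact fun t ht => Set.mem_sUnion.2 ⟨Γ₁, hΓ₁, (hc hΓ₁).g0 ht⟩
      · rintro s t ⟨A, hA, hsA⟩ ⟨B, hB, htB⟩
        rcases hchain.total hA hB with hAB | hBA
        · exact Set.mem_sUnion.2 ⟨B, hB, (hc hB).gadd s t (hAB hsA) htB⟩
        · exact Set.mem_sUnion.2 ⟨A, hA, (hc hA).gadd s t hsA (hBA htB)⟩
      · rintro x y r ⟨A, hA, hm⟩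
        exact Set.mem_sUnion.2 ⟨A, hA, (hc hA).gneg x y r hm⟩
      · rintro x y r ⟨A, hA, hm⟩
        exact (hc hA).gW x y r hm
      · rintro x y r ⟨A, hA, hm⟩ hcone
        exact (hc hA).gpos x y r hm hcone)
    (Gamma0 a b) (good_Gamma0 hab h)
  exact ⟨m, hm.1, fun Γ' hΓ' hsub => hm.2 hΓ' hsub⟩

include hab h in
theorem total_of_maximal {Γ : Set (M × M × ℝ)} (G : Good a b Γ)
    (Gmax : ∀ Γ' : Set (M × M × ℝ), Good a b Γ' → Γ ⊆ Γ' → Γ' ⊆ Γ)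
    {x₀ : M} (hx₀ : x₀ ∈ Wb b) : ∃ r : ℝ, (x₀, 0, r) ∈ Γ := by
  by_contra hno
  push_neg at hno
  have hx₀' := hx₀
  -- choose the value γ for x₀
  classical
  set LB' : Set ℝ := {t | ∃ (x y : M) (r : ℝ) (n : ℕ), (x, y, r) ∈ Γ ∧ 0 < n ∧
    cone b (x + n • x₀) y ∧ t = -r / n} with hLB'
  obtain ⟨K, cK, hK⟩ := hx₀'
  have hKb : ((K • b : M), (0 : M), (K : ℝ)) ∈ Γ := G.g0 (kb_mem_Gamma0 K)
  have hKcone : cone b (K • b) ((0 : M) + 1 • x₀) := by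
    refine ⟨0, cK, Wb_zero, ?_⟩
    simp only [zero_add, one_nsmul, add_zero]
    exact hK
  -- consistency: every lower bound ≤ every upper bound
  have lcons : ∀ x₁ y₁ r₁ (n₁ : ℕ), (x₁, y₁, r₁) ∈ Γ → 0 < n₁ → cone b (x₁ + n₁ • x₀) y₁ →
      ∀ x₂ y₂ r₂ (n₂ : ℕ), (x₂, y₂, r₂) ∈ Γ → 0 < n₂ → cone b x₂ (y₂ + n₂ • x₀) →
      -r₁ / n₁ ≤ r₂ / n₂ := by
    intro x₁ y₁ r₁ n₁ hm₁ hn₁ hc₁ x₂ y₂ r₂ n₂ hm₂ hn₂ hc₂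
    have e1 := G.mem_smul hm₁ n₂
    have e2 := G.mem_smul hm₂ n₁
    have esum := G.gadd _ _ e1 e2
    simp only [Prod.mk_add_mk] at esum
    have cc1 : cone b (n₂ • x₁ + (n₂ * n₁) • x₀) (n₂ • y₁) := by
      have := cone_smul hc₁ n₂
      rw [smul_add, smul_smul] at this
      exact this
    have cc2 : cone b (n₁ • x₂) (n₁ • y₂ + (n₂ * n₁) • x₀) := by
      have := cone_smul hc₂ n₁
      rw [smul_add, smul_smul, mul_comm n₁ n₂] at this
      exact this
    have ccc : cone b (n₂ • x₁ + n₁ • x₂ + (n₂ * n₁) • x₀)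
        (n₂ • y₁ + n₁ • y₂ + (n₂ * n₁) • x₀) := by
      have hadd := cone_add cc1 cc2
      rw [show n₂ • x₁ + (n₂ * n₁) • x₀ + n₁ • x₂
            = n₂ • x₁ + n₁ • x₂ + (n₂ * n₁) • x₀ from by abel,
        show n₂ • y₁ + (n₁ • y₂ + (n₂ * n₁) • x₀)
            = n₂ • y₁ + n₁ • y₂ + (n₂ * n₁) • x₀ from by abel] at hadd
      exact hadd
    have ccan : cone b (n₂ • x₁ + n₁ • x₂) (n₂ • y₁ + n₁ • y₂) :=
      cone_cancel (Wb_smul hx₀ (n₂ * n₁)) ccc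
    have hpos := G.gpos _ _ _ esum ccan
    have hn₁R : (0 : ℝ) < n₁ := by exact_mod_cast hn₁
    have hn₂R : (0 : ℝ) < n₂ := by exact_mod_cast hn₂
    rw [div_le_div_iff₀ hn₁R hn₂R]
    nlinarith [hpos]
  have hbdd : BddAbove (insert (0 : ℝ) LB') := by
    refine ⟨max 0 (K : ℝ), ?_⟩
    rintro t (rfl | ⟨x, y, r, n, hm, hn, hcn, rfl⟩)
    · exact le_max_left _ _
    · refine le_trans ?_ (le_max_right _ _)
      have := lcons x y r n hm hn hcn (K • b) 0 K 1 hKb one_pos (by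
        simpa using hKcone)
      simpa using this
  set γ : ℝ := sSup (insert (0 : ℝ) LB') with hγ
  have hγub : ∀ x y r (n : ℕ), (x, y, r) ∈ Γ → 0 < n → cone b x (y + n • x₀) → γ ≤ r / n := by
    intro x y r n hm hn hcn
    refine csSup_le (Set.insert_nonempty _ _) ?_
    rintro t (rfl | ⟨x', y', r', n', hm', hn', hcn', rfl⟩)
    · have : cone b x y := cone_drop hcn
      have hr := G.gpos _ _ _ hm this
      positivity
    · exact lcons x' y' r' n' hm' hn' hcn' x y r n hm hn hcn
  have hγlb : ∀ x y r (n : ℕ), (x, y, r) ∈ Γ → 0 < n → cone b (x + n • x₀) y → -r / n ≤ γ :=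
    fun x y r n hm hn hcn => le_csSup hbdd (Set.mem_insert_iff.2 (Or.inr ⟨x, y, r, n, hm, hn, hcn, rfl⟩))
  -- the extended graph
  set Γ' : Set (M × M × ℝ) := {t | ∃ (x y : M) (r : ℝ) (k l : ℕ), (x, y, r) ∈ Γ ∧
    t = (x + k • x₀, y + l • x₀, r + ((k : ℝ) - l) * γ)} with hΓ'
  have hsub : Γ ⊆ Γ' := by
    rintro ⟨x, y, r⟩ hm
    exact ⟨x, y, r, 0, 0, hm, by simp⟩
  have hGood' : Good a b Γ' := by
    constructor
    · exact fun t ht => hsub (G.g0 ht)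
    · rintro s t ⟨x, y, r, k, l, hm, rfl⟩ ⟨x', y', r', k', l', hm', rfl⟩
      refine ⟨x + x', y + y', r + r', k + k', l + l', G.gadd _ _ hm hm', ?_⟩
      simp only [Prod.mk_add_mk]
      refine congrArg₂ _ ?_ (congrArg₂ _ ?_ ?_)
      · rw [add_nsmul]; abel
      · rw [add_nsmul]; abel
      · push_cast; ring
    · rintro x y r ⟨x', y', r', k, l, hm, ht⟩
      obtain ⟨h1, h2, h3⟩ : x = x' + k • x₀ ∧ y = y' + l • x₀ ∧
          r = r' + ((k : ℝ) - l) * γ := by simpa [Prod.ext_iff] using ht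
      exact ⟨y', x', -r', l, k, G.gneg _ _ _ hm, by
        rw [h1, h2, h3]
        refine congrArg₂ _ rfl (congrArg₂ _ rfl ?_)
        ring⟩
    · rintro x y r ⟨x', y', r', k, l, hm, ht⟩
      obtain ⟨h1, h2, h3⟩ : x = x' + k • x₀ ∧ y = y' + l • x₀ ∧
          r = r' + ((k : ℝ) - l) * γ := by simpa [Prod.ext_iff] using ht
      obtain ⟨hx', hy'⟩ := G.gW _ _ _ hm
      exact ⟨by rw [h1]; exact Wb_add hx' (Wb_smul hx₀ k),
        by rw [h2]; exact Wb_add hy' (Wb_smul hx₀ l)⟩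
    · rintro x y r ⟨x', y', r', k, l, hm, ht⟩ hcone
      obtain ⟨h1, h2, h3⟩ : x = x' + k • x₀ ∧ y = y' + l • x₀ ∧
          r = r' + ((k : ℝ) - l) * γ := by simpa [Prod.ext_iff] using ht
      rw [h1, h2] at hcone
      rw [h3]
      rcases lt_trichotomy k l with hkl | hkl | hkl
      · -- k < l : upper constraint
        obtain ⟨n, rfl⟩ : ∃ n, l = k + n := ⟨l - k, by omega⟩
        have hn : 0 < n := by omega
        have hc2 : cone b x' (y' + n • x₀) := by
          apply cone_cancel (Wb_smul hx₀ k)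
          have : y' + (k + n) • x₀ = y' + n • x₀ + k • x₀ := by rw [add_nsmul]; abel
          rw [this] at hcone
          exact hcone
        have hnR : (0 : ℝ) < n := by exact_mod_cast hn
        have h4 : γ * n ≤ r' := by
          have := hγub x' y' r' n hm hn hc2
          rwa [le_div_iff₀ hnR] at this
        have e2 : r' + ((k : ℝ) - ((k + n : ℕ) : ℝ)) * γ = r' - γ * n := by push_cast; ring
        rw [e2]
        linarith [h4]
      · -- k = l
        subst hkl
        have hc2 : cone b x' y' := cone_cancel (Wb_smul hx₀ k) hcone
        have := G.gpos _ _ _ hm hc2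
        simp only [sub_self, zero_mul]
        linarith
      · -- l < k : lower constraint
        obtain ⟨n, rfl⟩ : ∃ n, k = l + n := ⟨k - l, by omega⟩
        have hn : 0 < n := by omega
        have hc2 : cone b (x' + n • x₀) y' := by
          apply cone_cancel (Wb_smul hx₀ l)
          have e1 : x' + (l + n) • x₀ = x' + n • x₀ + l • x₀ := by rw [add_nsmul]; abel
          rw [e1] at hcone
          exact hcone
        have hnR : (0 : ℝ) < n := by exact_mod_cast hn
        have h4 := hγlb x' y' r' n hm hn hc2
        rw [div_le_iff₀ hnR] at h4
        have e2 : r' + (((l + n : ℕ) : ℝ) - (l : ℝ)) * γ = r' + γ * n := by push_cast; ring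
        rw [e2]
        linarith [h4]
  have : Γ' ⊆ Γ := Gmax Γ' hGood' hsub
  have hx0mem : ((x₀ : M), (0 : M), γ) ∈ Γ' := by
    refine ⟨0, 0, 0, 1, 0, by simpa using G.g0 zero_mem_Gamma0, ?_⟩
    simp
  exact hno γ (this hx0mem)

include hab h in
theorem exists_state :
    ∃ ν : M → ℝ≥0∞, ν 0 = 0 ∧ (∀ x y, ν (x + y) = ν x + ν y) ∧ ν b = 1 ∧ 1 ≤ ν a := by
  classical
  obtain ⟨Γ, G, Gmax⟩ := exists_maximal_good hab h
  set ν : M → ℝ≥0∞ := fun x =>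
    if hx : ∃ r : ℝ, (x, 0, r) ∈ Γ then ENNReal.ofReal hx.choose else ⊤ with hν
  have hval : ∀ x r, (x, (0 : M), r) ∈ Γ → ν x = ENNReal.ofReal r := by
    intro x r hr
    have hx : ∃ r : ℝ, (x, (0 : M), r) ∈ Γ := ⟨r, hr⟩
    simp only [hν, dif_pos hx]
    exact congrArg _ (G.funct hx.choose_spec hr)
  have hpos : ∀ x r, (x, (0 : M), r) ∈ Γ → 0 ≤ r := fun x r hr =>
    G.gpos _ _ _ hr (cone_zero x)
  have htop : ∀ x, x ∉ Wb b → ν x = ⊤ := by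
    intro x hx
    have : ¬ ∃ r : ℝ, (x, (0 : M), r) ∈ Γ := fun ⟨r, hr⟩ => hx (G.gW _ _ _ hr).1
    simp only [hν, dif_neg this]
  refine ⟨ν, ?_, ?_, ?_, ?_⟩
  · rw [hval 0 0 (G.g0 zero_mem_Gamma0)]; simp
  · intro x y
    by_cases hx : x ∈ Wb b
    · by_cases hy : y ∈ Wb b
      · obtain ⟨r, hr⟩ := total_of_maximal hab h G Gmax hx
        obtain ⟨s, hs⟩ := total_of_maximal hab h G Gmax hy
        have hsum := G.gadd _ _ hr hs
        simp only [Prod.mk_add_mk, add_zero] at hsum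
        rw [hval _ _ hr, hval _ _ hs, hval _ _ hsum,
          ENNReal.ofReal_add (hpos _ _ hr) (hpos _ _ hs)]
      · have h1 : x + y ∉ Wb b := fun hxy => hy (Wb_of_mle ⟨x, by abel⟩ hxy)
        rw [htop _ h1, htop _ hy]; simp
    · have h1 : x + y ∉ Wb b := fun hxy => hx (Wb_of_mle (mle_self_add x y) hxy)
      rw [htop _ h1, htop _ hx]; simp
  · rw [hval b 1 (G.g0 b_mem_Gamma0)]; simp
  · rw [hval a (beta a b) (G.g0 a_mem_Gamma0)]
    rw [ENNReal.one_le_ofReal]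
    exact one_le_beta

end Core

end S9


/-- For all `a, b ∈ T(α)` the following are equivalent: (1) there is
`n ∈ ℕ` with `(n+1)a ≤ nb`; (2) there is `n ∈ ℕ` with `a ≤ nb`, and every state
`ν ∈ M_∞(α)` with `ν(b) = 1` satisfies `ν(a) < 1`. -/
theorem stmt9 {Γ : Type*} [Group Γ] [Countable Γ]
    {X : Type*} [TopologicalSpace X] [CompactSpace X] [T2Space X]
    [TotallyDisconnectedSpace X]
    (α : Γ →* (X ≃ₜ X)) (a b : TypeSemigroup α) :
    (∃ n : ℕ, tle α ((n + 1) • a) (n • b)) ↔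
      ((∃ n : ℕ, tle α a (n • b)) ∧
        ∀ ν : TypeSemigroup α → ℝ≥0∞, IsState α ν → ν b = 1 → ν a < 1) := by
  constructor
  · rintro ⟨n, hn⟩
    obtain ⟨c, hc⟩ : ∃ c, (n + 1) • a + c = n • b := hn
    constructor
    · exact ⟨n, n • a + c, by rw [← add_assoc, add_comm a (n • a), ← succ_nsmul]; exact hc⟩
    · intro ν hν hb
      obtain ⟨h0, hadd⟩ := hν
      have hsmul : ∀ (k : ℕ) (x : TypeSemigroup α), ν (k • x) = k * ν x := by
        intro k x
        induction k with
        | zero => rw [zero_nsmul, h0, Nat.cast_zero, zero_mul]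
        | succ i ih =>
          rw [succ_nsmul, hadd, ih, Nat.cast_succ, add_mul, one_mul]
      have h1 : ν (n • b) = ν ((n + 1) • a) + ν c := by rw [← hc, hadd]
      rw [hsmul, hsmul, hb, mul_one] at h1
      by_contra hcon
      push_neg at hcon
      have h2 : ((n + 1 : ℕ) : ℝ≥0∞) ≤ (n : ℝ≥0∞) := by
        calc ((n + 1 : ℕ) : ℝ≥0∞) = ((n + 1 : ℕ) : ℝ≥0∞) * 1 := (mul_one _).symm
          _ ≤ ((n + 1 : ℕ) : ℝ≥0∞) * ν a := mul_le_mul_right hcon _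
          _ ≤ (n : ℝ≥0∞) := by rw [h1]; exact le_add_right le_rfl
      have := Nat.cast_le.mp h2
      omega
  · rintro ⟨⟨N, hN⟩, hst⟩
    by_contra hno
    push_neg at hno
    have h' : ∀ n : ℕ, ¬ ∃ c, (n + 1) • a + c = n • b := fun n hc => hno n hc
    have hab : ∃ N : ℕ, S9.mle a (N • b) := ⟨N, hN⟩
    obtain ⟨ν, h0, hadd, hb, ha⟩ := S9.exists_state hab h'
    exact absurd (hst ν ⟨h0, hadd⟩ hb) (not_lt.2 ha)
end
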